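/- arXiv:2201.01558 — 8 statements merged into one kernel-verified Lean document; each statement's English description precedes it below -/
import Mathlib

section
/- Let S ⊂ ℤ^n be a finite subset and let G be a finite abelian group with |G| = |S|. Suppose S splits G with splitting sequence s = (s_1,…,s_n) ∈ G^n. Define the group homomorphism φ : ℤ^n → G by φ(x) = Σ_{i=1}^n x_i s_i and let Λ = ker φ. Then Λ is an additive subgroup of ℤ^n and the translates v + S, for v ∈ Λ, are pairwise disjoint and cover ℤ^n; that is, Λ is a lattice tiling of ℤ^n by S. -/
/-- The set `A ⊆ ℤ^n` splits the abelian group `G` with splitting sequence `s`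
if the map `a ↦ Σ aᵢ sᵢ` is injective on `A`. -/
def Splits {n : ℕ} {G : Type*} [AddCommGroup G] (A : Set (Fin n → ℤ)) (s : Fin n → G) : Prop :=
  Set.InjOn (fun a => ∑ i, a i • s i) A

/-- `Λ` is a lattice tiling of `ℤ^n` by `S`: the translates `v + S`, `v ∈ Λ`,
are pairwise disjoint and cover `ℤ^n`. -/
def IsLatticeTiling {n : ℕ} (Λ : AddSubgroup (Fin n → ℤ)) (S : Set (Fin n → ℤ)) : Prop :=
  (∀ v ∈ Λ, ∀ w ∈ Λ, v ≠ w → Disjoint ((v + ·) '' S) ((w + ·) '' S)) ∧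
  ⋃ v ∈ (Λ : Set (Fin n → ℤ)), (v + ·) '' S = Set.univ

/-- The homomorphism `φ : ℤ^n → G`, `φ(x) = Σ xᵢ sᵢ`. -/
def splitMap {n : ℕ} {G : Type*} [AddCommGroup G] (s : Fin n → G) : (Fin n → ℤ) →+ G :=
  AddMonoidHom.mk' (fun x => ∑ i, x i • s i) (fun a b => by
    simp [add_smul, Finset.sum_add_distrib])

/-- If a finite set `S ⊆ ℤ^n` splits a finite abelian group `G` with `|G| = |S|`
via the splitting sequence `s`, then the kernel `Λ` of `φ(x) = Σ xᵢ sᵢ`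
is a lattice tiling of `ℤ^n` by `S`. -/
theorem stmt0 {n : ℕ} {G : Type*} [AddCommGroup G] [Fintype G]
    (S : Set (Fin n → ℤ)) (hfin : S.Finite)
    (hcard : Fintype.card G = Nat.card S)
    (s : Fin n → G) (hsplit : Splits S s) :
    IsLatticeTiling (splitMap s).ker S := by
  set φ := splitMap s with hφ
  have hφS : ∀ a, φ a = ∑ i, a i • s i := fun a => rfl
  have hinj : Set.InjOn φ S := hsplit
  -- surjectivity of φ on S
  have himg : φ '' S = Set.univ := by
    apply Set.eq_of_subset_of_ncard_le (Set.subset_univ _)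
    · rw [Set.ncard_univ, Set.ncard_image_of_injOn hinj, Nat.card_eq_fintype_card, hcard,
        Nat.card_coe_set_eq]
  constructor
  · intro v hv w hw hvw
    rw [Set.disjoint_left]
    rintro x ⟨a, ha, rfl⟩ ⟨b, hb, hab⟩
    have hker_v : φ v = 0 := hv
    have hker_w : φ w = 0 := hw
    have : φ a = φ b := by
      have := congrArg φ hab
      simpa [map_add, hker_v, hker_w] using this.symm
    have hab' : a = b := hinj ha hb this
    apply hvw
    have := hab
    rw [hab'] at this
    exact add_right_cancel this.symm
  · ext x
    simp only [Set.mem_iUnion, Set.mem_image, Set.mem_univ, iff_true]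
    have : φ x ∈ φ '' S := by rw [himg]; trivial
    obtain ⟨a, ha, haeq⟩ := this
    refine ⟨x - a, ?_, a, ha, by abel⟩
    show φ (x - a) = 0
    rw [map_sub, haeq, sub_self]
end

section
/- Let Λ ⊆ ℤ^n be an additive subgroup that is a lattice tiling of ℤ^n by a finite set S ⊂ ℤ^n, and suppose the quotient group G = ℤ^n/Λ is finite. Let φ : ℤ^n → G be the quotient homomorphism and set s = (φ(e_1), φ(e_2), …, φ(e_n)), where e_i is the i-th standard unit vector of ℤ^n. Then S splits G with splitting sequence s. -/
lemma sum_smul_single_mk {n : ℕ} (Λ : AddSubgroup (Fin n → ℤ)) (a : Fin n → ℤ) :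
    ∑ i, a i • (QuotientAddGroup.mk (Pi.single i (1 : ℤ)) : (Fin n → ℤ) ⧸ Λ)
      = QuotientAddGroup.mk a := by
  have : a = ∑ i, a i • Pi.single i (1 : ℤ) := by
    ext j
    simp [Finset.sum_apply, Pi.single_apply]
  conv_rhs => rw [this]
  simp_rw [← QuotientAddGroup.mk_zsmul]
  exact (map_sum (QuotientAddGroup.mk' Λ) (fun i => a i • Pi.single i (1:ℤ)) Finset.univ).symm

/-- If `Λ ⊆ ℤ^n` is a lattice tiling of `ℤ^n` by a finite set `S`, and the quotient
`G = ℤ^n/Λ` is finite, then `S` splits `G` with the splitting sequence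
`s = (φ(e₁),…,φ(eₙ))`, where `φ` is the quotient homomorphism and `eᵢ` the unit vectors. -/
theorem stmt1 {n : ℕ} (Λ : AddSubgroup (Fin n → ℤ)) (S : Set (Fin n → ℤ))
    (hfin : S.Finite) (hG : Finite ((Fin n → ℤ) ⧸ Λ))
    (htile : IsLatticeTiling Λ S) :
    Splits S (fun i => (QuotientAddGroup.mk (Pi.single i (1 : ℤ)) : (Fin n → ℤ) ⧸ Λ)) := by
  intro a ha b hb hab
  simp only [sum_smul_single_mk] at hab
  have hv : a - b ∈ Λ := by
    rwa [QuotientAddGroup.eq_iff_sub_mem] at hab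
  by_contra hne
  have hvne : a - b ≠ 0 := sub_ne_zero.mpr hne
  have hd := htile.1 (a - b) hv 0 Λ.zero_mem hvne
  have h1 : a ∈ ((a - b) + ·) '' S := ⟨b, hb, by simp⟩
  have h2 : a ∈ ((0 : Fin n → ℤ) + ·) '' S := ⟨a, ha, by simp⟩
  exact hd.ne_of_mem h1 h2 rfl
end

section
/- For every integer n ≥ 2, there exists an additive subgroup Λ of ℤ^n that is a lattice tiling of ℤ^n by the non-cyclic error ball E(n,2,1,0); equivalently, there exists a perfect lattice code in ℤ^n correcting a single non-cyclic burst of length 2 of (1,0)-limited-magnitude errors. -/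
/-- The non-cyclic error ball `E(n,b,k₊,k₋)`: vectors `e ∈ [−k₋,k₊]^n` (indices `0,…,n−1`
corresponding to coordinates `1,…,n`) such that for some `i`, all entries outside the
window `[i, i+b−1]` vanish. -/
def nonCyclicBall (n b kp km : ℕ) : Set (Fin n → ℤ) :=
  {e | (∀ ℓ, -(km : ℤ) ≤ e ℓ ∧ e ℓ ≤ (kp : ℤ)) ∧
    ∃ i : Fin n, ∀ ℓ : Fin n, (ℓ.val < i.val ∨ i.val + b ≤ ℓ.val) → e ℓ = 0}

/-- The cyclic error ball `E°(n,b,k₊,k₋)`: vectors `e ∈ [−k₋,k₊]^n` such that for some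
`i ∈ ℤ_n`, all entries outside the cyclic window `{i, i+1, …, i+b−1}` vanish. -/
def cyclicBall (n b kp km : ℕ) : Set (Fin n → ℤ) :=
  {e | (∀ ℓ, -(km : ℤ) ≤ e ℓ ∧ e ℓ ≤ (kp : ℤ)) ∧
    ∃ i : ZMod n, ∀ ℓ : Fin n,
      (∀ j : ℕ, j < b → ((ℓ.val : ZMod n) ≠ i + (j : ZMod n))) → e ℓ = 0}
/- ### Auxiliary helpers -/

lemma int_small (M d : ℤ) (h : M ∣ d) (h1 : -M < d) (h2 : d < M) : d = 0 := by
  rcases h with ⟨k, rfl⟩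
  have hM : 0 < M := by omega
  rcases lt_trichotomy k 0 with hk | hk | hk
  · have : M * k ≤ M * (-1) := mul_le_mul_of_nonneg_left (by omega) hM.le
    omega
  · rw [hk, mul_zero]
  · have : M * 1 ≤ M * k := mul_le_mul_of_nonneg_left (by omega) hM.le
    omega

lemma int_small3 (M d : ℤ) (hM : 0 < M) (h : M ∣ d) (h1 : -(2*M) < d) (h2 : d < 2*M) :
    d = -M ∨ d = 0 ∨ d = M := by
  rcases h with ⟨k, rfl⟩
  have h5 : k = -1 ∨ k = 0 ∨ k = 1 := by
    by_contra hc
    push_neg at hc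
    obtain ⟨c1, c2, c3⟩ := hc
    rcases le_or_gt k (-2) with hk | hk
    · have : M * k ≤ M * (-2) := mul_le_mul_of_nonneg_left (by omega) hM.le
      omega
    · have : M * 2 ≤ M * k := mul_le_mul_of_nonneg_left (by omega) hM.le
      omega
  rcases h5 with rfl | rfl | rfl
  · left; ring
  · right; left; ring
  · right; right; ring

def sg {n : ℕ} (i : Fin n) : Fin n → ℤ := fun ℓ => if ℓ = i then 1 else 0

def wlin {n : ℕ} (W : Fin n → ℤ) : (Fin n → ℤ) →+ ℤ where
  toFun x := ∑ ℓ, W ℓ * x ℓ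
  map_zero' := by simp
  map_add' x y := by simp [mul_add, Finset.sum_add_distrib]

lemma wlin_sg {n : ℕ} (W : Fin n → ℤ) (i : Fin n) : wlin W (sg i) = W i := by
  simp [wlin, sg, mul_ite, Finset.sum_ite_eq']

lemma mem_ball_iff {n : ℕ} (hn : 2 ≤ n) (e : Fin n → ℤ) :
    e ∈ nonCyclicBall n 2 1 0 ↔
      e = 0 ∨ (∃ i : Fin n, e = sg i) ∨
      (∃ i : ℕ, ∃ h : i + 1 < n, e = sg ⟨i, by omega⟩ + sg ⟨i+1, h⟩) := by
  constructor
  · rintro ⟨hb, i, hi⟩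
    have h01 : ∀ ℓ, e ℓ = 0 ∨ e ℓ = 1 := by
      intro ℓ
      obtain ⟨h1, h2⟩ := hb ℓ
      simp only [Nat.cast_zero, neg_zero, Nat.cast_one] at h1 h2
      omega
    by_cases hin : i.1 + 1 < n
    · set j : Fin n := ⟨i.1 + 1, hin⟩ with hj
      have hval : ∀ ℓ : Fin n, ℓ ≠ i → ℓ ≠ j → e ℓ = 0 := by
        intro ℓ hℓi hℓj
        apply hi
        have d1 : ℓ.1 ≠ i.1 := fun h => hℓi (Fin.ext h)
        have d2 : ℓ.1 ≠ i.1 + 1 := fun h => hℓj (Fin.ext h)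
        omega
      have hij : i ≠ j := by
        intro h
        have := congrArg Fin.val h
        simp [hj] at this
      rcases h01 i with h₁ | h₁ <;> rcases h01 j with h₂ | h₂
      · left
        funext ℓ
        by_cases hℓ : ℓ = i
        · simpa [hℓ] using h₁
        by_cases hℓ2 : ℓ = j
        · simpa [hℓ2] using h₂
        · simpa using hval ℓ hℓ hℓ2
      · right; left
        exact ⟨j, by
          funext ℓ
          by_cases hℓ : ℓ = i
          · simp [sg, hℓ, hij, h₁]
          by_cases hℓ2 : ℓ = j
          · simp [sg, hℓ2, h₂]
          · simp [sg, hℓ2, hval ℓ hℓ hℓ2]⟩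
      · right; left
        exact ⟨i, by
          funext ℓ
          by_cases hℓ : ℓ = i
          · simp [sg, hℓ, h₁]
          by_cases hℓ2 : ℓ = j
          · simp [sg, hℓ2, h₂, show ¬ j = i from fun h => hij h.symm]
          · simp [sg, hℓ, hval ℓ hℓ hℓ2]⟩
      · right; right
        refine ⟨i.1, hin, ?_⟩
        have hii : (⟨i.1, by omega⟩ : Fin n) = i := rfl
        have hjj : (⟨i.1 + 1, hin⟩ : Fin n) = j := rfl
        rw [hii, hjj]
        funext ℓ
        by_cases hℓ : ℓ = i
        · simp [sg, hℓ, hij, h₁, Pi.add_apply]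
        by_cases hℓ2 : ℓ = j
        · simp [sg, hℓ2, h₂, Pi.add_apply, show ¬ j = i from fun h => hij h.symm]
        · simp [sg, hℓ, hℓ2, hval ℓ hℓ hℓ2, Pi.add_apply]
    · have hval : ∀ ℓ : Fin n, ℓ ≠ i → e ℓ = 0 := by
        intro ℓ hℓi
        apply hi
        have d1 : ℓ.1 ≠ i.1 := fun h => hℓi (Fin.ext h)
        have := ℓ.2
        omega
      rcases h01 i with h₁ | h₁
      · left
        funext ℓ
        by_cases hℓ : ℓ = i
        · simpa [hℓ] using h₁
        · simpa using hval ℓ hℓ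
      · right; left
        exact ⟨i, by
          funext ℓ
          by_cases hℓ : ℓ = i
          · simp [sg, hℓ, h₁]
          · simp [sg, hℓ, hval ℓ hℓ]⟩
  · intro h
    rcases h with rfl | ⟨i, rfl⟩ | ⟨i, hi, rfl⟩
    · exact ⟨fun ℓ => by simp, ⟨0, by omega⟩, fun ℓ _ => rfl⟩
    · refine ⟨fun ℓ => ?_, i, fun ℓ hℓ => ?_⟩
      · by_cases hℓ : ℓ = i <;> simp [sg, hℓ]
      · have : ℓ ≠ i := fun h => by subst h; omega
        simp [sg, this]
    · refine ⟨fun ℓ => ?_, ⟨i, by omega⟩, fun ℓ hℓ => ?_⟩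
      · by_cases h1 : ℓ = (⟨i, by omega⟩ : Fin n) <;>
          by_cases h2 : ℓ = (⟨i+1, hi⟩ : Fin n) <;>
            simp_all [sg, Pi.add_apply] <;> omega
      · have d1 : ℓ ≠ (⟨i, by omega⟩ : Fin n) := by
          intro h; subst h; simp only [Fin.val_mk] at hℓ; omega
        have d2 : ℓ ≠ (⟨i+1, hi⟩ : Fin n) := by
          intro h; subst h; simp only [Fin.val_mk] at hℓ; omega
        simp [sg, d1, d2, Pi.add_apply]

lemma tiling_of {n : ℕ} (Λ : AddSubgroup (Fin n → ℤ)) (B : Set (Fin n → ℤ))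
    (hinj : ∀ s ∈ B, ∀ t ∈ B, s - t ∈ Λ → s = t)
    (hsurj : ∀ x : Fin n → ℤ, ∃ s ∈ B, x - s ∈ Λ) :
    IsLatticeTiling Λ B := by
  constructor
  · intro v hv w hw hvw
    rw [Set.disjoint_left]
    rintro z ⟨s, hs, rfl⟩ ⟨t, ht, hzw⟩
    have hst : s - t ∈ Λ := by
      have h1 : s - t = w - v := by
        rw [sub_eq_sub_iff_add_eq_add, add_comm s v]
        exact hzw.symm
      rw [h1]; exact sub_mem hw hv
    have hts := hinj s hs t ht hst
    subst hts
    exact hvw (add_right_cancel hzw).symm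
  · ext x
    simp only [Set.mem_iUnion, Set.mem_univ, iff_true, Set.mem_image, SetLike.mem_coe]
    obtain ⟨s, hs, hxs⟩ := hsurj x
    exact ⟨x - s, hxs, s, hs, by abel⟩

/- ### Case 1 : n % 4 ≠ 2, weights in ℤ/2n -/

def cc (n : ℕ) : ℕ := (n+1)/2

def bb (n : ℕ) : ℤ := 1 - cc n + (if ((n+1)/2 + n) % 2 = 0 then (n:ℤ) else 0)

lemma bb_facts (n : ℕ) (hn : 2 ≤ n) (h4 : n % 4 ≠ 2) :
    bb n % 2 = 1 ∧ ((2*(n:ℤ)) ∣ 2 * bb n - (2 - 2 * (cc n : ℤ))) ∧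
      (n : ℤ) ≤ 2 * (cc n : ℤ) ∧ (2 * (cc n : ℤ)) ≤ (n : ℤ) + 1 := by
  unfold bb cc
  split_ifs with h
  · refine ⟨by omega, ⟨1, by push_cast; ring⟩, by omega, by omega⟩
  · refine ⟨by omega, ⟨0, by push_cast; ring⟩, by omega, by omega⟩

def WW (n : ℕ) (i : ℕ) : ℤ := if i % 2 = 0 then bb n + i else (i : ℤ) + 1 - bb n

lemma WW_odd (n : ℕ) (hn : 2 ≤ n) (h4 : n % 4 ≠ 2) (i : ℕ) : WW n i % 2 = 1 := by
  have hb := (bb_facts n hn h4).1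
  unfold WW
  split_ifs with h <;> omega

lemma WW_sum (n : ℕ) (i : ℕ) : WW n i + WW n (i+1) = 2*(i:ℤ)+2 := by
  unfold WW
  split_ifs with h1 h2 h2 <;> push_cast <;> omega

lemma WW_inj (n : ℕ) (hn : 2 ≤ n) (h4 : n % 4 ≠ 2) {i j : ℕ} (hi : i < n) (hj : j < n)
    (h : (2*(n:ℤ)) ∣ WW n i - WW n j) : i = j := by
  obtain ⟨hb1, hb2, hb3, hb4⟩ := bb_facts n hn h4
  unfold WW at h
  split_ifs at h with p q q
  · have h' : (2*(n:ℤ)) ∣ ((i:ℤ) - j) := by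
      convert h using 1; ring
    have := int_small _ _ h' (by omega) (by omega)
    omega
  · have h' : (2*(n:ℤ)) ∣ ((i:ℤ) - j + 1 - 2 * (cc n : ℤ)) := by
      have := dvd_sub h hb2
      convert this using 1; rfl; ring
    have := int_small _ _ h' (by omega) (by omega)
    omega
  · have h' : (2*(n:ℤ)) ∣ ((i:ℤ) - j - 1 + 2 * (cc n : ℤ)) := by
      have := dvd_add h hb2
      convert this using 1; rfl; ring
    have := int_small _ _ h' (by omega) (by omega)
    omega
  · have h' : (2*(n:ℤ)) ∣ ((i:ℤ) - j) := by
      convert h using 1; ring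
    have := int_small _ _ h' (by omega) (by omega)
    omega

lemma case1 (n : ℕ) (hn : 2 ≤ n) (h4 : n % 4 ≠ 2) :
    ∃ Λ : AddSubgroup (Fin n → ℤ), IsLatticeTiling Λ (nonCyclicBall n 2 1 0) := by
  obtain ⟨hb1, hb2, hb3, hb4⟩ := bb_facts n hn h4
  set M : ℤ := 2*(n:ℤ) with hM
  have hMpos : 0 < M := by positivity
  set W : Fin n → ℤ := fun i => WW n i.1 with hWdef
  set f := wlin W with hf
  have hmem : ∀ x, x ∈ (AddSubgroup.zmultiples M).comap f ↔ M ∣ f x := by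
    intro x
    simp [AddSubgroup.mem_comap, Int.mem_zmultiples_iff]
  have fs : ∀ i : Fin n, f (sg i) = WW n i.1 := fun i => wlin_sg W i
  have fp : ∀ (i : ℕ) (h : i+1 < n) (h' : i < n),
      f (sg ⟨i, h'⟩ + sg ⟨i+1, h⟩) = 2*(i:ℤ)+2 := by
    intro i h h'
    rw [map_add, fs, fs]
    exact WW_sum n i
  have h2M : (2:ℤ) ∣ M := ⟨(n:ℤ), rfl⟩
  refine ⟨(AddSubgroup.zmultiples M).comap f, tiling_of _ _ ?_ ?_⟩
  · -- injectivity
    intro s hs t ht hst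
    rw [mem_ball_iff hn] at hs ht
    rw [hmem, map_sub] at hst
    rcases hs with rfl | ⟨i, rfl⟩ | ⟨i, hi1, rfl⟩ <;>
      rcases ht with rfl | ⟨j, rfl⟩ | ⟨j, hj1, rfl⟩
    · rfl
    · rw [map_zero, fs] at hst
      have h2 : (2:ℤ) ∣ 0 - WW n j.1 := dvd_trans h2M hst
      have := WW_odd n hn h4 j.1
      omega
    · rw [map_zero, fp j hj1] at hst
      have := int_small M _ hst (by omega) (by omega)
      omega
    · rw [map_zero, fs] at hst
      have h2 : (2:ℤ) ∣ WW n i.1 - 0 := dvd_trans h2M hst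
      have := WW_odd n hn h4 i.1
      omega
    · rw [fs, fs] at hst
      have := WW_inj n hn h4 i.2 j.2 hst
      rw [show i = j from Fin.ext this]
    · rw [fs, fp j hj1] at hst
      have h2 : (2:ℤ) ∣ WW n i.1 - (2*(j:ℤ)+2) := dvd_trans h2M hst
      have := WW_odd n hn h4 i.1
      omega
    · rw [fp i hi1, map_zero] at hst
      have := int_small M _ hst (by omega) (by omega)
      omega
    · rw [fp i hi1, fs] at hst
      have h2 : (2:ℤ) ∣ (2*(i:ℤ)+2) - WW n j.1 := dvd_trans h2M hst
      have := WW_odd n hn h4 j.1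
      omega
    · rw [fp i hi1, fp j hj1] at hst
      have := int_small M _ hst (by omega) (by omega)
      have hij : i = j := by omega
      subst hij
      rfl
  · -- surjectivity
    intro x
    set r := f x with hr
    set q := r % M with hq
    have hq0 : 0 ≤ q := Int.emod_nonneg r (by omega)
    have hqM : q < M := Int.emod_lt_of_pos r hMpos
    have hd : M ∣ r - q := by
      refine ⟨r / M, ?_⟩
      have := Int.emod_add_mul_ediv r M
      linarith
    by_cases hqz : q = 0
    · refine ⟨0, (mem_ball_iff hn 0).mpr (Or.inl rfl), ?_⟩
      rw [hmem, map_sub, map_zero]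
      rw [sub_zero]
      have : r - q = r := by omega
      rwa [this] at hd
    by_cases hq2 : q % 2 = 0
    · -- q even nonzero : pair at i = q/2 - 1
      set i : ℕ := q.toNat / 2 - 1 with hi
      have hi1 : i + 1 < n := by omega
      have hival : 2*(i:ℤ)+2 = q := by omega
      refine ⟨sg ⟨i, by omega⟩ + sg ⟨i+1, hi1⟩,
        (mem_ball_iff hn _).mpr (Or.inr (Or.inr ⟨i, hi1, rfl⟩)), ?_⟩
      rw [hmem, map_sub, fp i hi1, hival]
      exact hd
    · -- q odd
      set i1 : ℤ := (q - bb n) % M with hi1def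
      set i2 : ℤ := (q + bb n - 1) % M with hi2def
      have hi1nn : 0 ≤ i1 := Int.emod_nonneg _ (by omega)
      have hi1lt : i1 < M := Int.emod_lt_of_pos _ hMpos
      have hi2nn : 0 ≤ i2 := Int.emod_nonneg _ (by omega)
      have hi2lt : i2 < M := Int.emod_lt_of_pos _ hMpos
      have d1 : M ∣ (q - bb n) - i1 := by
        refine ⟨(q - bb n) / M, ?_⟩
        have := Int.emod_add_mul_ediv (q - bb n) M
        linarith
      have d2 : M ∣ (q + bb n - 1) - i2 := by
        refine ⟨(q + bb n - 1) / M, ?_⟩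
        have := Int.emod_add_mul_ediv (q + bb n - 1) M
        linarith
      have hi1par : i1 % 2 = 0 := by
        have := Int.emod_emod_of_dvd (q - bb n) h2M
        rw [← hi1def] at this
        omega
      have hi2par : i2 % 2 = 1 := by
        have := Int.emod_emod_of_dvd (q + bb n - 1) h2M
        rw [← hi2def] at this
        omega
      have key : i1 < n ∨ i2 < n := by
        by_contra hc
        push_neg at hc
        obtain ⟨k1, k2⟩ := hc
        have h'' : M ∣ (i1 - i2 + 1 - 2*(cc n : ℤ)) := by
          have := dvd_sub (dvd_sub d2 d1) hb2
          have heq : (i1 - i2 + 1 - 2*(cc n : ℤ)) =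
              ((q + bb n - 1) - i2 - ((q - bb n) - i1)) - (2 * bb n - (2 - 2 * (cc n : ℤ))) := by
            ring
          rw [heq]
          exact this
        have := int_small M _ h'' (by omega) (by omega)
        omega
      rcases key with hlt | hlt
      · refine ⟨sg ⟨i1.toNat, by omega⟩, (mem_ball_iff hn _).mpr (Or.inr (Or.inl ⟨_, rfl⟩)), ?_⟩
        rw [hmem, map_sub, fs]
        have hWval : WW n i1.toNat = bb n + i1 := by
          unfold WW
          rw [if_pos (by omega)]
          congr 1
          omega
        rw [hWval]
        have heq : r - (bb n + i1) = (r - q) + ((q - bb n) - i1) := by ring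
        rw [heq]
        exact dvd_add hd d1
      · refine ⟨sg ⟨i2.toNat, by omega⟩, (mem_ball_iff hn _).mpr (Or.inr (Or.inl ⟨_, rfl⟩)), ?_⟩
        rw [hmem, map_sub, fs]
        have hWval : WW n i2.toNat = i2 + 1 - bb n := by
          unfold WW
          rw [if_neg (by omega)]
          push_cast [Int.toNat_of_nonneg hi2nn]
          ring
        rw [hWval]
        have heq : r - (i2 + 1 - bb n) = (r - q) + ((q + bb n - 1) - i2) := by ring
        rw [heq]
        exact dvd_add hd d2

/- ### Case 2 : n % 4 = 2, weights in ℤ/n × ℤ/2 -/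

def AA (i : ℕ) : ℕ := i + 1 - i % 2
def C4 (i : ℕ) : ℕ := (i+1)/2 % 2

lemma AAsum (i : ℕ) : AA i + AA (i+1) = 2*i+2 := by unfold AA; omega
lemma C4sum (i : ℕ) : (C4 i + C4 (i+1)) % 2 = (i+1) % 2 := by unfold C4; omega

lemma case2 (n : ℕ) (hn : 2 ≤ n) (h4 : n % 4 = 2) :
    ∃ Λ : AddSubgroup (Fin n → ℤ), IsLatticeTiling Λ (nonCyclicBall n 2 1 0) := by
  set W1 : Fin n → ℤ := fun i => (AA i.1 : ℤ) with hW1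
  set W2 : Fin n → ℤ := fun i => (C4 i.1 : ℤ) with hW2
  set f1 := wlin W1 with hf1
  set f2 := wlin W2 with hf2
  set Λ : AddSubgroup (Fin n → ℤ) :=
    (AddSubgroup.zmultiples ((n:ℤ))).comap f1 ⊓ (AddSubgroup.zmultiples ((2:ℤ))).comap f2
    with hΛ
  have hmem : ∀ x, x ∈ Λ ↔ ((n:ℤ) ∣ f1 x ∧ (2:ℤ) ∣ f2 x) := by
    intro x
    simp [hΛ, AddSubgroup.mem_inf, AddSubgroup.mem_comap, Int.mem_zmultiples_iff]
  have fs1 : ∀ i : Fin n, f1 (sg i) = (AA i.1 : ℤ) := fun i => wlin_sg W1 i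
  have fs2 : ∀ i : Fin n, f2 (sg i) = (C4 i.1 : ℤ) := fun i => wlin_sg W2 i
  have fp1 : ∀ (i : ℕ) (h : i+1 < n) (h' : i < n),
      f1 (sg ⟨i, h'⟩ + sg ⟨i+1, h⟩) = 2*(i:ℤ)+2 := by
    intro i h h'
    rw [map_add, fs1, fs1]
    have := AAsum i
    push_cast
    omega
  have fp2 : ∀ (i : ℕ) (h : i+1 < n) (h' : i < n),
      f2 (sg ⟨i, h'⟩ + sg ⟨i+1, h⟩) = (C4 i : ℤ) + C4 (i+1) := by
    intro i h h'
    rw [map_add, fs2, fs2]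
  have h2n : (2:ℤ) ∣ (n:ℤ) := ⟨((n/2 : ℕ) : ℤ), by push_cast; omega⟩
  have hnpos : (0:ℤ) < (n:ℤ) := by positivity
  refine ⟨Λ, tiling_of _ _ ?_ ?_⟩
  · -- injectivity
    intro s hs t ht hst
    rw [mem_ball_iff hn] at hs ht
    rw [hmem, map_sub, map_sub] at hst
    obtain ⟨hd1, hd2⟩ := hst
    rcases hs with rfl | ⟨i, rfl⟩ | ⟨i, hi1, rfl⟩ <;>
      rcases ht with rfl | ⟨j, rfl⟩ | ⟨j, hj1, rfl⟩
    · rfl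
    · rw [map_zero, fs1] at hd1
      have hj := j.2
      have := int_small (n:ℤ) _ hd1 (by unfold AA; push_cast; omega) (by push_cast; omega)
      unfold AA at this
      push_cast at this
      omega
    · rw [map_zero, fp1 j hj1] at hd1
      rw [map_zero, fp2 j hj1] at hd2
      have hCs := C4sum j
      have := int_small3 (n:ℤ) _ hnpos hd1 (by push_cast; omega) (by push_cast; omega)
      omega
    · rw [map_zero, fs1] at hd1
      have hi := i.2
      have := int_small (n:ℤ) _ hd1 (by unfold AA; push_cast; omega) (by unfold AA; push_cast; omega)
      unfold AA at this
      push_cast at this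
      omega
    · rw [fs1, fs1] at hd1
      rw [fs2, fs2] at hd2
      have hi := i.2
      have hj := j.2
      have := int_small (n:ℤ) _ hd1 (by unfold AA; push_cast; omega) (by unfold AA; push_cast; omega)
      have hij : i.1 = j.1 := by unfold AA C4 at *; push_cast at this hd2; omega
      rw [show i = j from Fin.ext hij]
    · rw [fs1, fp1 j hj1] at hd1
      have h2d : (2:ℤ) ∣ ((AA i.1 : ℤ) - (2*(j:ℤ)+2)) := dvd_trans h2n hd1
      unfold AA at h2d
      have hi := i.2
      push_cast at h2d
      omega
    · rw [fp1 i hi1, map_zero] at hd1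
      rw [fp2 i hi1, map_zero] at hd2
      have hCs := C4sum i
      have := int_small3 (n:ℤ) _ hnpos hd1 (by push_cast; omega) (by push_cast; omega)
      omega
    · rw [fp1 i hi1, fs1] at hd1
      have h2d : (2:ℤ) ∣ ((2*(i:ℤ)+2) - (AA j.1 : ℤ)) := dvd_trans h2n hd1
      unfold AA at h2d
      have hj := j.2
      push_cast at h2d
      omega
    · rw [fp1 i hi1, fp1 j hj1] at hd1
      rw [fp2 i hi1, fp2 j hj1] at hd2
      have hCsi := C4sum i
      have hCsj := C4sum j
      have := int_small3 (n:ℤ) _ hnpos hd1 (by push_cast; omega) (by push_cast; omega)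
      have hij : i = j := by omega
      subst hij
      rfl
  · -- surjectivity
    intro x
    set r1 := f1 x with hr1
    set r2 := f2 x with hr2
    set q := r1 % (n:ℤ) with hq
    set p := r2 % 2 with hp
    have hq0 : 0 ≤ q := Int.emod_nonneg r1 (by omega)
    have hqn : q < n := Int.emod_lt_of_pos r1 hnpos
    have hp01 : p = 0 ∨ p = 1 := by omega
    have hd1 : (n:ℤ) ∣ r1 - q := by
      refine ⟨r1 / n, ?_⟩
      have := Int.emod_add_mul_ediv r1 (n:ℤ)
      linarith
    have hd2 : (2:ℤ) ∣ r2 - p := by omega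
    have hsing : ∀ (m : ℕ) (hm : m < n), (AA m : ℤ) = q → (C4 m : ℤ) % 2 = p →
        ∃ s ∈ nonCyclicBall n 2 1 0, x - s ∈ Λ := by
      intro m hm hA hC
      refine ⟨sg ⟨m, hm⟩, (mem_ball_iff hn _).mpr (Or.inr (Or.inl ⟨_, rfl⟩)), ?_⟩
      rw [hmem, map_sub, map_sub, fs1, fs2]
      have hv : ((⟨m, hm⟩ : Fin n) : ℕ) = m := rfl
      rw [hv, hA]
      exact ⟨hd1, by omega⟩
    have hpair : ∀ (j : ℕ) (hj : j+1 < n), ((n:ℤ) ∣ q - (2*(j:ℤ)+2)) →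
        ((C4 j + C4 (j+1) : ℕ) : ℤ) % 2 = p →
        ∃ s ∈ nonCyclicBall n 2 1 0, x - s ∈ Λ := by
      intro j hj hA hC
      refine ⟨sg ⟨j, by omega⟩ + sg ⟨j+1, hj⟩,
        (mem_ball_iff hn _).mpr (Or.inr (Or.inr ⟨j, hj, rfl⟩)), ?_⟩
      rw [hmem, map_sub, map_sub, fp1 j hj, fp2 j hj]
      constructor
      · have : r1 - (2*(j:ℤ)+2) = (r1 - q) + (q - (2*(j:ℤ)+2)) := by ring
        rw [this]
        exact dvd_add hd1 hA
      · push_cast at hC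
        omega
    set qn := q.toNat with hqn'
    by_cases hqodd : qn % 2 = 1
    · -- singleton, index qn-1 or qn
      have hCs := C4sum (qn - 1)
      have hq1 : qn - 1 + 1 = qn := by omega
      rw [hq1] at hCs
      by_cases hc : ((C4 (qn - 1) : ℤ) % 2 = p)
      · exact hsing (qn - 1) (by omega) (by unfold AA; omega) hc
      · exact hsing qn (by omega) (by unfold AA; omega) (by omega)
    · -- q even
      by_cases hqz : qn = 0
      · rcases hp01 with hp0 | hp1
        · refine ⟨0, (mem_ball_iff hn 0).mpr (Or.inl rfl), ?_⟩
          rw [hmem, map_sub, map_sub, map_zero, map_zero, sub_zero, sub_zero]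
          constructor
          · have hq00 : q = 0 := by omega
            rw [hq00, sub_zero] at hd1
            exact hd1
          · omega
        · refine hpair (n/2 - 1) (by omega) ?_ ?_
          · have hq00 : q = 0 := by omega
            have : q - (2*((n/2 - 1 : ℕ):ℤ)+2) = -(n:ℤ) := by push_cast; omega
            rw [this]
            exact dvd_neg.mpr dvd_rfl
          · have hCs := C4sum (n/2 - 1)
            omega
      · set t : ℕ := qn / 2 with ht
        have ht1 : 1 ≤ t := by omega
        have htn : t ≤ n/2 - 1 := by omega
        by_cases hc : (((t + n/2) % 2 : ℕ) : ℤ) = p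
        · refine hpair (t + n/2 - 1) (by omega) ?_ ?_
          · have : q - (2*((t + n/2 - 1 : ℕ):ℤ)+2) = -(n:ℤ) := by push_cast; omega
            rw [this]
            exact dvd_neg.mpr dvd_rfl
          · have hCs := C4sum (t + n/2 - 1)
            omega
        · refine hpair (t - 1) (by omega) ?_ ?_
          · have : q - (2*((t - 1 : ℕ):ℤ)+2) = 0 := by push_cast; omega
            rw [this]
            exact dvd_zero _
          · have hCs := C4sum (t - 1)
            omega

/-- For every `n ≥ 2`, there is a lattice tiling of `ℤ^n` by the non-cyclic error ball
`E(n,2,1,0)`, i.e., a perfect lattice code correcting a single non-cyclic `2`-burst of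
`(1,0)`-limited-magnitude errors. -/
theorem stmt2 (n : ℕ) (hn : 2 ≤ n) :
    ∃ Λ : AddSubgroup (Fin n → ℤ), IsLatticeTiling Λ (nonCyclicBall n 2 1 0) := by
  by_cases h4 : n % 4 = 2
  · exact case2 n hn h4
  · exact case1 n hn h4
end

section
/- Let m ≥ 2 be an even integer and n = 2m+1. Define s ∈ (ℤ_{4m+2})^n by s_{2j+1} = m+1+2j and s_{2j+2} = 3m+3+2j (mod 4m+2) for 0 ≤ j ≤ m−1, and s_{2m+1} = 3m+1. Then the non-cyclic error ball E(n,2,1,0) splits ℤ_{4m+2} with splitting sequence s. -/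
-- shape lemma
lemma shape3 {n : ℕ} {e : Fin n → ℤ} (he : e ∈ nonCyclicBall n 2 1 0) :
    e = 0 ∨ (∃ t : Fin n, e = fun ℓ => if ℓ = t then 1 else 0) ∨
      (∃ t t' : Fin n, t.val + 1 = t'.val ∧
        e = fun ℓ => if ℓ = t ∨ ℓ = t' then 1 else 0) := by
  obtain ⟨hb, i, hw⟩ := he
  have hz : ∀ ℓ : Fin n, ℓ ≠ i → ℓ.val ≠ i.val + 1 → e ℓ = 0 := by
    intro ℓ h1 h2
    apply hw
    have : ℓ.val ≠ i.val := fun h => h1 (Fin.ext h)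
    omega
  have hv : ∀ ℓ, e ℓ = 0 ∨ e ℓ = 1 := fun ℓ => by have := hb ℓ; push_cast at this; omega
  by_cases hi1 : i.val + 1 < n
  · set i' : Fin n := ⟨i.val + 1, hi1⟩ with hi'
    have hne : i ≠ i' := by simp [hi', Fin.ext_iff]
    rcases hv i with h0 | h1 <;> rcases hv i' with h0' | h1'
    · left; funext ℓ
      by_cases l1 : ℓ = i
      · simpa [l1] using h0
      by_cases l2 : ℓ = i'
      · simpa [l2] using h0'
      · have : ℓ.val ≠ i.val + 1 := fun h => l2 (Fin.ext h)
        simpa using hz ℓ l1 this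
    · right; left; exact ⟨i', by
        funext ℓ
        by_cases l2 : ℓ = i'
        · simp [l2, h1']
        by_cases l1 : ℓ = i
        · simp [l1, l2, h0, hne]
        · have : ℓ.val ≠ i.val + 1 := fun h => l2 (Fin.ext h)
          simp [l1, l2, hz ℓ l1 this]⟩
    · right; left; exact ⟨i, by
        funext ℓ
        by_cases l1 : ℓ = i
        · simp [l1, h1]
        by_cases l2 : ℓ = i'
        · simp [l1, l2, h0', Ne.symm hne]
        · have : ℓ.val ≠ i.val + 1 := fun h => l2 (Fin.ext h)
          simp [l1, hz ℓ l1 this]⟩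
    · right; right; refine ⟨i, i', rfl, ?_⟩
      funext ℓ
      by_cases l1 : ℓ = i
      · simp [l1, h1]
      by_cases l2 : ℓ = i'
      · simp [l2, h1']
      · have : ℓ.val ≠ i.val + 1 := fun h => l2 (Fin.ext h)
        simp [l1, l2, hz ℓ l1 this]
  · have hz' : ∀ ℓ : Fin n, ℓ ≠ i → e ℓ = 0 := by
      intro ℓ h1
      exact hz ℓ h1 (by omega)
    rcases hv i with h0 | h1
    · left; funext ℓ
      by_cases l1 : ℓ = i
      · simpa [l1] using h0
      · simpa using hz' ℓ l1
    · right; left; exact ⟨i, by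
        funext ℓ
        by_cases l1 : ℓ = i
        · simp [l1, h1]
        · simp [l1, hz' ℓ l1]⟩

lemma sum_single {n : ℕ} {G : Type*} [AddCommGroup G] (s : Fin n → G) (t : Fin n) :
    ∑ ℓ, (if ℓ = t then (1 : ℤ) else 0) • s ℓ = s t := by
  simp [ite_smul]

lemma sum_pair {n : ℕ} {G : Type*} [AddCommGroup G] (s : Fin n → G) (t t' : Fin n)
    (h : t ≠ t') :
    ∑ ℓ, (if ℓ = t ∨ ℓ = t' then (1 : ℤ) else 0) • s ℓ = s t + s t' := by
  have key : ∀ ℓ, (if ℓ = t ∨ ℓ = t' then (1 : ℤ) else 0) • s ℓ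
      = (if ℓ = t then (1 : ℤ) else 0) • s ℓ + (if ℓ = t' then (1 : ℤ) else 0) • s ℓ := by
    intro ℓ
    by_cases h1 : ℓ = t <;> by_cases h2 : ℓ = t' <;> simp_all
  rw [Fintype.sum_congr _ _ key, Finset.sum_add_distrib, sum_single, sum_single]


/-- Case 1 of Theorem: for even `m ≥ 2` and `n = 2m+1`, the sequence with
`s_{2j+1} = m+1+2j`, `s_{2j+2} = 3m+3+2j` (`0 ≤ j ≤ m−1`) and `s_{2m+1} = 3m+1`
(equivalently, `s_t = m+1+t` for even `t` and `s_t = 3m+2+t` for odd `t`, `t` 0-based)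
splits `ℤ_{4m+2}` by the non-cyclic error ball `E(n,2,1,0)`. -/
theorem stmt3 (m : ℕ) (hm : 2 ≤ m) (hme : Even m) :
    Splits (nonCyclicBall (2 * m + 1) 2 1 0)
      (fun t : Fin (2 * m + 1) =>
        if t.val % 2 = 0 then ((m + 1 + t.val : ℕ) : ZMod (4 * m + 2))
        else ((3 * m + 2 + t.val : ℕ) : ZMod (4 * m + 2))) := by
  obtain ⟨r, hr⟩ := hme
  set N := 4 * m + 2 with hN
  set s : Fin (2 * m + 1) → ZMod N := fun t =>
    if t.val % 2 = 0 then ((m + 1 + t.val : ℕ) : ZMod N)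
    else ((3 * m + 2 + t.val : ℕ) : ZMod N) with hs
  -- the natural value of s
  have hsval : ∀ t : Fin (2 * m + 1),
      s t = (((if t.val % 2 = 0 then m + 1 + t.val else 3 * m + 2 + t.val : ℕ)) : ZMod N) := by
    intro t; simp only [hs]; split <;> rfl
  -- near equality lemma
  have keyA : ∀ a b : ℕ, ((a : ZMod N) = (b : ZMod N)) → a ≤ b + 4 * m + 1 →
      b ≤ a + 4 * m + 1 → a = b := by
    intro a b h h1 h2
    rw [ZMod.natCast_eq_natCast_iff] at h
    rcases le_total a b with hab | hab
    · have := (Nat.modEq_iff_dvd' hab).mp h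
      have := Nat.eq_zero_of_dvd_of_lt this (by omega)
      omega
    · have := (Nat.modEq_iff_dvd' hab).mp h.symm
      have h3 : b - a < N ∨ b - a = 0 := by omega
      have := Nat.eq_zero_of_dvd_of_lt this (by omega)
      omega
  -- no multiple of N in (N, 2N)
  have keyB : ∀ v : ℕ, 4 * m + 3 ≤ v → v ≤ 8 * m + 3 → ¬ (N ∣ v) := by
    rintro v h1 h2 ⟨k, hk⟩
    rcases k with _ | _ | k
    · omega
    · omega
    · have h3 : N * 2 ≤ N * (k + 1 + 1) := Nat.mul_le_mul (le_refl N) (by omega)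
      rw [← hk] at h3
      omega
  -- parity lemma: odd nat casts are nonzero after mapping to ZMod 2
  have hdvd2 : (2 : ℕ) ∣ N := ⟨2 * m + 1, by omega⟩
  have keyC : ∀ a b : ℕ, a % 2 = 1 → b % 2 = 0 → ((a : ZMod N) ≠ (b : ZMod N)) := by
    intro a b ha hb h
    have := congrArg (ZMod.castHom hdvd2 (ZMod 2)) h
    rw [map_natCast, map_natCast] at this
    rw [ZMod.natCast_eq_natCast_iff] at this
    unfold Nat.ModEq at this
    omega
  -- odd values of s
  have hodd : ∀ t : ℕ, t ≤ 2 * m →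
      ((if t % 2 = 0 then m + 1 + t else 3 * m + 2 + t : ℕ)) % 2 = 1 := by
    intro t ht; split <;> omega
  intro a ha b hb hab
  simp only at hab
  rcases shape3 ha with rfl | ⟨t, rfl⟩ | ⟨t, t', htt', rfl⟩ <;>
    rcases shape3 hb with rfl | ⟨u, rfl⟩ | ⟨u, u', huu', rfl⟩
  · rfl
  · -- 0 = single u
    exfalso
    rw [sum_single] at hab
    simp only [Pi.zero_apply, zero_smul, Finset.sum_const_zero] at hab
    rw [hsval u] at hab
    exact keyC _ 0 (hodd u.val (by omega)) (by omega) (by exact_mod_cast hab.symm)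
  · -- 0 = pair
    exfalso
    have hne : u ≠ u' := by intro h; rw [h] at huu'; omega
    rw [sum_pair _ _ _ hne] at hab
    simp only [Pi.zero_apply, zero_smul, Finset.sum_const_zero] at hab
    rw [hsval u, hsval u'] at hab
    rw [← Nat.cast_add] at hab
    have hval : ((if u.val % 2 = 0 then m + 1 + u.val else 3 * m + 2 + u.val : ℕ)
        + (if u'.val % 2 = 0 then m + 1 + u'.val else 3 * m + 2 + u'.val : ℕ))
        = 4 * m + 4 + 2 * u.val := by
      have : u'.val = u.val + 1 := huu'.symm
      rw [this]; split_ifs <;> omega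
    rw [hval] at hab
    have : N ∣ 4 * m + 4 + 2 * u.val := by
      rw [← ZMod.natCast_eq_zero_iff]; exact hab.symm
    have hu2m : u.val + 1 ≤ 2 * m := by
      have := u'.isLt; omega
    exact keyB _ (by omega) (by omega) this
  · -- single t = 0
    exfalso
    rw [sum_single] at hab
    simp only [Pi.zero_apply, zero_smul, Finset.sum_const_zero] at hab
    rw [hsval t] at hab
    exact keyC _ 0 (hodd t.val (by omega)) (by omega) (by exact_mod_cast hab)
  · -- single = single
    rw [sum_single, sum_single, hsval, hsval] at hab
    have ht2m : t.val ≤ 2 * m := by omega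
    have hu2m : u.val ≤ 2 * m := by omega
    have := keyA _ _ hab (by split_ifs <;> omega) (by split_ifs <;> omega)
    have htu : t = u := by
      apply Fin.ext
      revert this; split_ifs <;> omega
    rw [htu]
  · -- single = pair
    exfalso
    have hne : u ≠ u' := by intro h; rw [h] at huu'; omega
    rw [sum_single, sum_pair _ _ _ hne, hsval, hsval, hsval, ← Nat.cast_add] at hab
    have hval : ((if u.val % 2 = 0 then m + 1 + u.val else 3 * m + 2 + u.val : ℕ)
        + (if u'.val % 2 = 0 then m + 1 + u'.val else 3 * m + 2 + u'.val : ℕ))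
        = 4 * m + 4 + 2 * u.val := by
      have : u'.val = u.val + 1 := huu'.symm
      rw [this]; split_ifs <;> omega
    rw [hval] at hab
    exact keyC _ _ (hodd t.val (by omega)) (by omega) hab
  · -- pair = 0
    exfalso
    have hne : t ≠ t' := by intro h; rw [h] at htt'; omega
    rw [sum_pair _ _ _ hne] at hab
    simp only [Pi.zero_apply, zero_smul, Finset.sum_const_zero] at hab
    rw [hsval t, hsval t', ← Nat.cast_add] at hab
    have hval : ((if t.val % 2 = 0 then m + 1 + t.val else 3 * m + 2 + t.val : ℕ)
        + (if t'.val % 2 = 0 then m + 1 + t'.val else 3 * m + 2 + t'.val : ℕ))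
        = 4 * m + 4 + 2 * t.val := by
      have : t'.val = t.val + 1 := htt'.symm
      rw [this]; split_ifs <;> omega
    rw [hval] at hab
    have : N ∣ 4 * m + 4 + 2 * t.val := by
      rw [← ZMod.natCast_eq_zero_iff]; exact hab
    have ht2m : t.val + 1 ≤ 2 * m := by have := t'.isLt; omega
    exact keyB _ (by omega) (by omega) this
  · -- pair = single
    exfalso
    have hne : t ≠ t' := by intro h; rw [h] at htt'; omega
    rw [sum_pair _ _ _ hne, sum_single, hsval, hsval, hsval] at hab
    rw [← Nat.cast_add] at hab
    have hval : ((if t.val % 2 = 0 then m + 1 + t.val else 3 * m + 2 + t.val : ℕ)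
        + (if t'.val % 2 = 0 then m + 1 + t'.val else 3 * m + 2 + t'.val : ℕ))
        = 4 * m + 4 + 2 * t.val := by
      have : t'.val = t.val + 1 := htt'.symm
      rw [this]; split_ifs <;> omega
    rw [hval] at hab
    exact keyC _ _ (hodd u.val (by omega)) (by omega) hab.symm
  · -- pair = pair
    have hnet : t ≠ t' := by intro h; rw [h] at htt'; omega
    have hneu : u ≠ u' := by intro h; rw [h] at huu'; omega
    rw [sum_pair _ _ _ hnet, sum_pair _ _ _ hneu, hsval, hsval, hsval, hsval,
      ← Nat.cast_add, ← Nat.cast_add] at hab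
    have hvalt : ((if t.val % 2 = 0 then m + 1 + t.val else 3 * m + 2 + t.val : ℕ)
        + (if t'.val % 2 = 0 then m + 1 + t'.val else 3 * m + 2 + t'.val : ℕ))
        = 4 * m + 4 + 2 * t.val := by
      have : t'.val = t.val + 1 := htt'.symm
      rw [this]; split_ifs <;> omega
    have hvalu : ((if u.val % 2 = 0 then m + 1 + u.val else 3 * m + 2 + u.val : ℕ)
        + (if u'.val % 2 = 0 then m + 1 + u'.val else 3 * m + 2 + u'.val : ℕ))
        = 4 * m + 4 + 2 * u.val := by
      have : u'.val = u.val + 1 := huu'.symm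
      rw [this]; split_ifs <;> omega
    rw [hvalt, hvalu] at hab
    have ht2m : t.val + 1 ≤ 2 * m := by have := t'.isLt; omega
    have hu2m : u.val + 1 ≤ 2 * m := by have := u'.isLt; omega
    have := keyA _ _ hab (by omega) (by omega)
    have h1 : t = u := Fin.ext (by omega)
    have h2 : t' = u' := Fin.ext (by omega)
    rw [h1, h2]
end

section
/- Let m ≥ 2 be an even integer and n = 2m. Define s ∈ (ℤ_{4m})^n by s_{2j+1} = m+1+2j and s_{2j+2} = 3m+1+2j (mod 4m) for 0 ≤ j ≤ m−1. Then the non-cyclic error ball E(n,2,1,0) splits ℤ_{4m} with splitting sequence s. -/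
/-- indicator function of a single index -/
def ind {n : ℕ} (t : Fin n) : Fin n → ℤ := fun ℓ => if ℓ = t then 1 else 0

lemma sum_ind {n : ℕ} {G : Type*} [AddCommGroup G] (s : Fin n → G) (t : Fin n) :
    ∑ ℓ, ind t ℓ • s ℓ = s t := by simp [ind, ite_smul]

lemma sum_ind2 {n : ℕ} {G : Type*} [AddCommGroup G] (s : Fin n → G) (t u : Fin n) :
    ∑ ℓ, (ind t + ind u) ℓ • s ℓ = s t + s u := by
  have : ∀ ℓ, (ind t + ind u) ℓ • s ℓ = ind t ℓ • s ℓ + ind u ℓ • s ℓ := by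
    intro ℓ; simp [add_smul]
  rw [Finset.sum_congr rfl (fun ℓ _ => this ℓ), Finset.sum_add_distrib, sum_ind, sum_ind]

lemma zmodDvd {N a b : ℕ} (h : (a : ZMod N) = (b : ZMod N)) :
    (N : ℤ) ∣ (b : ℤ) - (a : ℤ) :=
  ((ZMod.natCast_eq_natCast_iff a b N).mp h).dvd

lemma classify {n : ℕ} {e : Fin n → ℤ} (he : e ∈ nonCyclicBall n 2 1 0) :
    e = 0 ∨ (∃ t, e = ind t) ∨
      (∃ t : Fin n, ∃ h : t.val + 1 < n, e = ind t + ind ⟨t.val + 1, h⟩) := by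
  obtain ⟨hb, i, hi⟩ := he
  have hb' : ∀ ℓ, e ℓ = 0 ∨ e ℓ = 1 := by
    intro ℓ; have := hb ℓ; simp at this; omega
  by_cases h1 : i.val + 1 < n
  · set i' : Fin n := ⟨i.val + 1, h1⟩ with hi'
    have hout : ∀ ℓ : Fin n, ℓ ≠ i → ℓ ≠ i' → e ℓ = 0 := by
      intro ℓ hℓ1 hℓ2
      apply hi
      have : ℓ.val ≠ i.val := fun h => hℓ1 (Fin.ext h)
      have : ℓ.val ≠ i.val + 1 := fun h => hℓ2 (Fin.ext h)
      omega
    have hne : i ≠ i' := by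
      intro h; have := congrArg Fin.val h; simp [hi'] at this
    rcases hb' i with h0 | h0 <;> rcases hb' i' with h0' | h0'
    · left; funext ℓ
      by_cases hℓ1 : ℓ = i; · rw [hℓ1]; exact h0
      by_cases hℓ2 : ℓ = i'; · rw [hℓ2]; exact h0'
      exact hout ℓ hℓ1 hℓ2
    · right; left; exact ⟨i', by
        funext ℓ
        by_cases hℓ2 : ℓ = i'; · simp [hℓ2, ind, h0']
        by_cases hℓ1 : ℓ = i; · simp [hℓ1, ind, hne, h0]
        simp [ind, hℓ2, hout ℓ hℓ1 hℓ2]⟩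
    · right; left; exact ⟨i, by
        funext ℓ
        by_cases hℓ1 : ℓ = i; · simp [hℓ1, ind, h0]
        by_cases hℓ2 : ℓ = i'; · simp [hℓ2, ind, (Ne.symm hne : i' ≠ i), h0']
        simp [ind, hℓ1, hout ℓ hℓ1 hℓ2]⟩
    · right; right; exact ⟨i, h1, by
        funext ℓ
        by_cases hℓ1 : ℓ = i; · simp [hℓ1, ind, hne, h0, ← hi']
        by_cases hℓ2 : ℓ = i'; · simp [hℓ2, ind, (Ne.symm hne : i' ≠ i), h0', ← hi']
        simp [ind, hℓ1, hℓ2, hout ℓ hℓ1 hℓ2, ← hi']⟩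
  · have hout : ∀ ℓ : Fin n, ℓ ≠ i → e ℓ = 0 := by
      intro ℓ hℓ
      apply hi
      have h2 : ℓ.val ≠ i.val := fun h => hℓ (Fin.ext h)
      have := ℓ.isLt
      omega
    rcases hb' i with h0 | h0
    · left; funext ℓ
      by_cases hℓ : ℓ = i; · rw [hℓ]; exact h0
      exact hout ℓ hℓ
    · right; left; exact ⟨i, by
        funext ℓ
        by_cases hℓ : ℓ = i; · simp [hℓ, ind, h0]
        simp [ind, hℓ, hout ℓ hℓ]⟩
section core

lemma sum_single_s5 (m : ℕ) (t : Fin (2*m)) :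
    ∑ i, ind t i • (fun t : Fin (2 * m) =>
        if t.val % 2 = 0 then ((m + 1 + t.val : ℕ) : ZMod (4 * m))
        else ((3 * m + t.val : ℕ) : ZMod (4 * m))) i
    = (if t.val % 2 = 0 then ((m + 1 + t.val : ℕ) : ZMod (4 * m))
        else ((3 * m + t.val : ℕ) : ZMod (4 * m))) := sum_ind _ t

lemma sum_double (m : ℕ) (t : Fin (2*m)) (h : t.val + 1 < 2*m) :
    ∑ i, (ind t + ind ⟨t.val + 1, h⟩) i • (fun t : Fin (2 * m) =>
        if t.val % 2 = 0 then ((m + 1 + t.val : ℕ) : ZMod (4 * m))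
        else ((3 * m + t.val : ℕ) : ZMod (4 * m))) i
    = ((2 + 2 * t.val : ℕ) : ZMod (4 * m)) := by
  rw [sum_ind2]
  have h4 : ((4 * m : ℕ) : ZMod (4 * m)) = 0 := ZMod.natCast_self _
  by_cases hp : t.val % 2 = 0
  · have hp1 : ¬ ((⟨t.val + 1, h⟩ : Fin (2*m)).val % 2 = 0) := by simp; omega
    simp only [if_pos hp, if_neg hp1]
    rw [← Nat.cast_add, show m + 1 + t.val + (3 * m + (⟨t.val + 1, h⟩ : Fin (2*m)).val)
      = 4 * m + (2 + 2 * t.val) from by simp; ring, Nat.cast_add, h4, zero_add]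
  · have hp1 : (⟨t.val + 1, h⟩ : Fin (2*m)).val % 2 = 0 := by simp; omega
    simp only [if_neg hp, if_pos hp1]
    rw [← Nat.cast_add, show 3 * m + t.val + (m + 1 + (⟨t.val + 1, h⟩ : Fin (2*m)).val)
      = 4 * m + (2 + 2 * t.val) from by simp; ring, Nat.cast_add, h4, zero_add]

lemma single_ne_zero (m c : ℕ) (hm : 2 ≤ m) (hc : m = c + c) (u : Fin (2*m)) :
    (if u.val % 2 = 0 then ((m + 1 + u.val : ℕ) : ZMod (4 * m))
        else ((3 * m + u.val : ℕ) : ZMod (4 * m))) ≠ 0 := by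
  have h2 : (2 : ℤ) ∣ ((4 * m : ℕ) : ℤ) := ⟨(2 * m : ℕ), by push_cast; ring⟩
  by_cases hp : u.val % 2 = 0 <;> [rw [if_pos hp]; rw [if_neg hp]] <;>
    intro h <;> rw [← Nat.cast_zero] at h <;>
    have hd := h2.trans (zmodDvd h) <;> push_cast at hd <;> omega

lemma double_ne_zero (m : ℕ) (hm : 2 ≤ m) (t : Fin (2*m)) (ht : t.val + 1 < 2*m) :
    ((2 + 2 * t.val : ℕ) : ZMod (4 * m)) ≠ 0 := by
  intro h
  rw [← Nat.cast_zero] at h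
  have hd := zmodDvd h
  have h0 := Int.eq_zero_of_abs_lt_dvd hd (by rw [abs_lt]; constructor <;> push_cast <;> omega)
  push_cast at h0; omega

lemma single_inj (m c : ℕ) (hm : 2 ≤ m) (hc : m = c + c) (t u : Fin (2*m))
    (h : (if t.val % 2 = 0 then ((m + 1 + t.val : ℕ) : ZMod (4 * m))
        else ((3 * m + t.val : ℕ) : ZMod (4 * m)))
      = (if u.val % 2 = 0 then ((m + 1 + u.val : ℕ) : ZMod (4 * m))
        else ((3 * m + u.val : ℕ) : ZMod (4 * m)))) : t = u := by
  have htl := t.isLt; have hul := u.isLt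
  refine Fin.ext ?_
  by_cases hp : t.val % 2 = 0 <;> by_cases hq : u.val % 2 = 0 <;>
    simp only [if_pos, if_neg, hp, hq, if_true] at h <;>
    [skip; skip; skip; skip] <;>
    first
    | (rw [if_pos hp, if_pos hq] at h; skip)
    | skip
  all_goals
    have hd := zmodDvd h
    have h0 := Int.eq_zero_of_abs_lt_dvd hd (by rw [abs_lt]; constructor <;> push_cast <;> omega)
    push_cast at h0
    omega

lemma single_ne_double (m c : ℕ) (hm : 2 ≤ m) (hc : m = c + c) (t u : Fin (2*m))
    (hu : u.val + 1 < 2*m) :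
    (if t.val % 2 = 0 then ((m + 1 + t.val : ℕ) : ZMod (4 * m))
        else ((3 * m + t.val : ℕ) : ZMod (4 * m)))
      ≠ ((2 + 2 * u.val : ℕ) : ZMod (4 * m)) := by
  have h2 : (2 : ℤ) ∣ ((4 * m : ℕ) : ℤ) := ⟨(2 * m : ℕ), by push_cast; ring⟩
  by_cases hp : t.val % 2 = 0 <;> [rw [if_pos hp]; rw [if_neg hp]] <;>
    intro h <;> have hd := h2.trans (zmodDvd h) <;> push_cast at hd <;> omega

lemma double_inj (m : ℕ) (hm : 2 ≤ m) (t u : Fin (2*m))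
    (ht : t.val + 1 < 2*m) (hu : u.val + 1 < 2*m)
    (h : ((2 + 2 * t.val : ℕ) : ZMod (4 * m)) = ((2 + 2 * u.val : ℕ) : ZMod (4 * m))) :
    t = u := by
  have hd := zmodDvd h
  have h0 := Int.eq_zero_of_abs_lt_dvd hd (by rw [abs_lt]; constructor <;> push_cast <;> omega)
  push_cast at h0
  exact Fin.ext (by omega)

end core

/-- Case 3 of Theorem: for even `m ≥ 2` and `n = 2m`, the sequence with
`s_{2j+1} = m+1+2j`, `s_{2j+2} = 3m+1+2j` (`0 ≤ j ≤ m−1`)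
(equivalently, `s_t = m+1+t` for even `t` and `s_t = 3m+t` for odd `t`, `t` 0-based)
splits `ℤ_{4m}` by the non-cyclic error ball `E(n,2,1,0)`. -/
theorem stmt5 (m : ℕ) (hm : 2 ≤ m) (hme : Even m) :
    Splits (nonCyclicBall (2 * m) 2 1 0)
      (fun t : Fin (2 * m) =>
        if t.val % 2 = 0 then ((m + 1 + t.val : ℕ) : ZMod (4 * m))
        else ((3 * m + t.val : ℕ) : ZMod (4 * m))) := by
  obtain ⟨c, hc⟩ := hme
  intro a ha b hb hab
  simp only at hab
  rcases classify ha with rfl | ⟨t, rfl⟩ | ⟨t, ht, rfl⟩ <;>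
      rcases classify hb with rfl | ⟨u, rfl⟩ | ⟨u, hu, rfl⟩ <;>
      simp only [Pi.zero_apply, zero_smul, Finset.sum_const_zero,
        sum_single_s5, sum_double] at hab
  · rfl
  · exact absurd hab.symm (single_ne_zero m c hm hc u)
  · exact absurd hab.symm (double_ne_zero m hm u hu)
  · exact absurd hab (single_ne_zero m c hm hc t)
  · rw [single_inj m c hm hc t u hab]
  · exact absurd hab (single_ne_double m c hm hc t u hu)
  · exact absurd hab (double_ne_zero m hm t ht)
  · exact absurd hab.symm (single_ne_double m c hm hc u t ht)
  · obtain rfl := double_inj m hm t u ht hu hab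
    rfl
end

section
/- For every integer n ≥ 4 with n ≡ 1 (mod 6) or n ≡ 4 (mod 6), there exists an additive subgroup Λ of ℤ^n that is a lattice tiling of ℤ^n by the cyclic error ball E°(n,2,1,0); equivalently, there exists a perfect lattice code in ℤ^n correcting a single cyclic burst of length 2 of (1,0)-limited-magnitude errors. -/
namespace Stmt7Aux

/-- divisibility from a `ZMod` equation -/
lemma zq_dvd (t : ℕ) (A B : ℤ) (h : (A : ZMod (2*t+1)) = (B : ZMod (2*t+1))) :
    (2*(t:ℤ)+1) ∣ (B - A) := by
  have h1 := (ZMod.intCast_eq_intCast_iff A B (2*t+1)).mp h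
  have h2 := Int.ModEq.dvd h1
  have h3 : ((2*t+1 : ℕ) : ℤ) = 2*(t:ℤ)+1 := by push_cast; ring
  rwa [h3] at h2

lemma dvd_shrink (t : ℕ) (c : ℤ) (hd : (2*(t:ℤ)+1) ∣ 2*c) : (2*(t:ℤ)+1) ∣ c := by
  obtain ⟨k, hk⟩ := hd
  exact ⟨((t:ℤ)+1)*k - c, by linear_combination ((t:ℤ)+1) * hk⟩

/-- first component of the weights -/
def Rw (m : ℕ) : ZMod 3 := if m % 3 = 2 then 2 else 1

/-- second component (integer form) of the weights -/
def Xw (t m : ℕ) : ℤ :=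
  if m % 3 = 0 then (m/3 : ℕ)
  else if m % 3 = 1 then (t:ℤ) + 1 + (m/3 : ℕ)
  else (t:ℤ) - 1 - 2*(m/3 : ℕ)

/-- the weight of coordinate `m` -/
def aw (t m : ℕ) : ZMod 3 × ZMod (2*t+1) := (Rw m, ((Xw t m : ℤ) : ZMod (2*t+1)))

/-- first component of sums of adjacent weights -/
def SRw (m : ℕ) : ZMod 3 := if m % 3 = 0 then 2 else 0

/-- second component (integer form) of sums of adjacent weights -/
def SXw (t m : ℕ) : ℤ :=
  if m = 3*t then (t:ℤ)
  else if m % 3 = 0 then (t:ℤ) + 1 + 2*(m/3 : ℕ)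
  else if m % 3 = 1 then 2*(t:ℤ) - (m/3 : ℕ)
  else (t:ℤ) - (m/3 : ℕ)

/-- sum of adjacent weights -/
def sw (t m : ℕ) : ZMod 3 × ZMod (2*t+1) := (SRw m, ((SXw t m : ℤ) : ZMod (2*t+1)))

lemma aw_add (t : ℕ) (ht : 1 ≤ t) (m : ℕ) (hm : m < 3*t+1) :
    aw t m + aw t ((m+1) % (3*t+1)) = sw t m := by
  rcases (by omega : m = 3*t ∨ (m < 3*t ∧ m % 3 = 0) ∨ (m < 3*t ∧ m % 3 = 1) ∨
      (m < 3*t ∧ m % 3 = 2)) with h | h | h | h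
  · have e1 : (m+1) % (3*t+1) = 0 := by
      rw [show m+1 = 3*t+1 by omega]; exact Nat.mod_self _
    have e2 : m % 3 = 0 := by omega
    have e3 : m / 3 = t := by omega
    simp only [aw, sw, Rw, Xw, SRw, SXw, e1, e2, e3, if_pos h]
    rw [Prod.mk_add_mk, Prod.mk.injEq]
    refine ⟨by decide, ?_⟩
    rw [← Int.cast_add]
    congr 1
  · have e1 : (m+1) % (3*t+1) = m+1 := Nat.mod_eq_of_lt (by omega)
    have e2 : (m+1) % 3 = 1 := by omega
    have e3 : (m+1) / 3 = m / 3 := by omega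
    simp only [aw, sw, Rw, Xw, SRw, SXw, e1, e2, e3, h.2, if_neg (by omega : ¬ m = 3*t)]
    rw [Prod.mk_add_mk, Prod.mk.injEq]
    refine ⟨by decide, ?_⟩
    rw [← Int.cast_add]
    congr 1
    push_cast
    ring
  · have e1 : (m+1) % (3*t+1) = m+1 := Nat.mod_eq_of_lt (by omega)
    have e2 : (m+1) % 3 = 2 := by omega
    have e3 : (m+1) / 3 = m / 3 := by omega
    simp only [aw, sw, Rw, Xw, SRw, SXw, e1, e2, e3, h.2, if_neg (by omega : ¬ m = 3*t)]
    rw [Prod.mk_add_mk, Prod.mk.injEq]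
    refine ⟨by decide, ?_⟩
    rw [← Int.cast_add]
    congr 1
    push_cast
    ring
  · have e1 : (m+1) % (3*t+1) = m+1 := Nat.mod_eq_of_lt (by omega)
    have e2 : (m+1) % 3 = 0 := by omega
    have e3 : (m+1) / 3 = m / 3 + 1 := by omega
    simp only [aw, sw, Rw, Xw, SRw, SXw, e1, e2, e3, h.2, if_neg (by omega : ¬ m = 3*t)]
    rw [Prod.mk_add_mk, Prod.mk.injEq]
    refine ⟨by decide, ?_⟩
    rw [← Int.cast_add]; congr 1; push_cast; ring

lemma aw_ne_zero (t m : ℕ) : aw t m ≠ 0 := by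
  intro h
  have h1 : Rw m = 0 := congrArg Prod.fst h
  unfold Rw at h1
  split_ifs at h1 <;> exact absurd h1 (by decide)

lemma sw_ne_zero (t m : ℕ) (ht : 1 ≤ t) (hm : m < 3*t+1) : sw t m ≠ 0 := by
  intro h
  have h1 : SRw m = 0 := congrArg Prod.fst h
  have h2 : ((SXw t m : ℤ) : ZMod (2*t+1)) = ((0:ZMod (2*t+1))) := congrArg Prod.snd h
  unfold SRw at h1
  have h2' : ((SXw t m : ℤ) : ZMod (2*t+1)) = (((0:ℤ)) : ZMod (2*t+1)) := by
    rw [h2]; simp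
  have hk := zq_dvd t _ _ h2'
  unfold SXw at hk
  split_ifs at h1 hk <;>
    first
    | omega
    | exact absurd h1 (by decide)
    | (have h9 := Int.eq_zero_of_abs_lt_dvd hk (by rw [abs_lt]; omega); omega)

lemma aw_inj (t m m' : ℕ) (ht : 1 ≤ t) (hm : m < 3*t+1) (hm' : m' < 3*t+1)
    (h : aw t m = aw t m') : m = m' := by
  have h1 : Rw m = Rw m' := congrArg Prod.fst h
  have h2 : ((Xw t m : ℤ) : ZMod (2*t+1)) = ((Xw t m' : ℤ) : ZMod (2*t+1)) :=
    congrArg Prod.snd h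
  unfold Rw at h1
  have hk := zq_dvd t _ _ h2
  unfold Xw at hk
  split_ifs at h1 hk <;>
    first
    | omega
    | exact absurd h1 (by decide)
    | exact absurd h1.symm (by decide)
    | (have h9 := Int.eq_zero_of_abs_lt_dvd hk (by rw [abs_lt]; omega); omega)

lemma sw_inj (t m m' : ℕ) (ht : 1 ≤ t) (hm : m < 3*t+1) (hm' : m' < 3*t+1)
    (h : sw t m = sw t m') : m = m' := by
  have h1 : SRw m = SRw m' := congrArg Prod.fst h
  have h2 : ((SXw t m : ℤ) : ZMod (2*t+1)) = ((SXw t m' : ℤ) : ZMod (2*t+1)) :=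
    congrArg Prod.snd h
  unfold SRw at h1
  have hk := zq_dvd t _ _ h2
  unfold SXw at hk
  split_ifs at h1 hk <;>
    first
    | omega
    | exact absurd h1 (by decide)
    | exact absurd h1.symm (by decide)
    | (have h9 := Int.eq_zero_of_abs_lt_dvd hk (by rw [abs_lt]; omega); omega)

lemma aw_ne_sw (t m m' : ℕ) (ht : 1 ≤ t) (hm : m < 3*t+1) (hm' : m' < 3*t+1) :
    aw t m ≠ sw t m' := by
  intro h
  have h1 : Rw m = SRw m' := congrArg Prod.fst h
  have h2 : ((Xw t m : ℤ) : ZMod (2*t+1)) = ((SXw t m' : ℤ) : ZMod (2*t+1)) :=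
    congrArg Prod.snd h
  unfold Rw SRw at h1
  have hk := zq_dvd t _ _ h2
  unfold Xw SXw at hk
  split_ifs at h1 hk with c1 c2 c3 c4 <;>
    first
    | omega
    | exact absurd h1 (by decide)
    | exact absurd h1.symm (by decide)
    | (have h9 := Int.eq_zero_of_abs_lt_dvd hk (by rw [abs_lt]; omega); omega)
    | (have hk2 : (2*(t:ℤ)+1) ∣ 2*(((m'/3 : ℕ) : ℤ) + ((m/3 : ℕ) : ℤ) + 1) := by
         convert hk using 1; push_cast; ring
       have h9 := Int.eq_zero_of_abs_lt_dvd (dvd_shrink t _ hk2) (by rw [abs_lt]; omega)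
       omega)



/-- indicator vector -/
def sgl {n : ℕ} (ℓ : Fin n) : Fin n → ℤ := fun m => if m = ℓ then 1 else 0

/-- encoding of ball elements -/
def ballEnc {n : ℕ} [NeZero n] : Option (Fin n × Bool) → (Fin n → ℤ)
  | none => 0
  | some (ℓ, false) => sgl ℓ
  | some (ℓ, true) => sgl ℓ + sgl (ℓ+1)

/-- the labeling homomorphism -/
def PHI (t n : ℕ) : (Fin n → ℤ) →+ ZMod 3 × ZMod (2*t+1) where
  toFun x := ∑ ℓ : Fin n, x ℓ • aw t ℓ.val
  map_zero' := by simp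
  map_add' x y := by
    simp only [Pi.add_apply, add_smul]
    rw [Finset.sum_add_distrib]

lemma PHI_sgl (t n : ℕ) (ℓ : Fin n) : PHI t n (sgl ℓ) = aw t ℓ.val := by
  show (∑ m : Fin n, (if m = ℓ then (1:ℤ) else 0) • aw t m.val) = aw t ℓ.val
  rw [Finset.sum_eq_single ℓ]
  · rw [if_pos rfl, one_smul]
  · intro b _ hb
    rw [if_neg hb, zero_smul]
  · intro hℓ
    exact absurd (Finset.mem_univ ℓ) hℓ

lemma fin_add_one_val {n : ℕ} [NeZero n] (hn : 4 ≤ n) (ℓ : Fin n) :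
    (ℓ + 1).val = (ℓ.val + 1) % n := by
  rw [Fin.val_add, Fin.val_one', Nat.mod_eq_of_lt (show 1 < n by omega)]

lemma PHI_ballEnc (t n : ℕ) [NeZero n] (hn : n = 3*t+1) (ht : 1 ≤ t) :
    ∀ c : Option (Fin n × Bool),
      PHI t n (ballEnc c) = Option.elim c 0 (fun p => if p.2 then sw t p.1.val else aw t p.1.val)
  | none => by simp [ballEnc]
  | some (ℓ, false) => by simp [ballEnc, PHI_sgl]
  | some (ℓ, true) => by
    subst hn
    have h4 : 4 ≤ 3*t+1 := by omega
    show PHI t _ (sgl ℓ + sgl (ℓ+1)) = sw t ℓ.val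
    rw [map_add, PHI_sgl, PHI_sgl, fin_add_one_val h4]
    exact aw_add t ht ℓ.val ℓ.isLt

/-- the decoder-side map is injective -/
lemma PHI_ballEnc_inj (t n : ℕ) [NeZero n] (hn : n = 3*t+1) (ht : 1 ≤ t) :
    Function.Injective (fun c : Option (Fin n × Bool) => PHI t n (ballEnc c)) := by
  have key := PHI_ballEnc t n hn ht
  intro c c' h
  simp only [key] at h
  have hlt : ∀ m : Fin n, m.val < 3*t+1 := fun m => hn ▸ m.isLt
  match c, c' with
  | none, none => rfl
  | none, some (ℓ, false) => exact absurd h.symm (aw_ne_zero t ℓ.val)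
  | none, some (ℓ, true) => exact absurd h.symm (sw_ne_zero t ℓ.val ht (hlt ℓ))
  | some (ℓ, false), none => exact absurd h (aw_ne_zero t ℓ.val)
  | some (ℓ, true), none => exact absurd h (sw_ne_zero t ℓ.val ht (hlt ℓ))
  | some (ℓ, false), some (ℓ', false) =>
    have h5 := aw_inj t ℓ.val ℓ'.val ht (hlt ℓ) (hlt ℓ') h
    exact congrArg (fun x => some (x, false)) (Fin.ext h5)
  | some (ℓ, true), some (ℓ', true) =>
    have h5 := sw_inj t ℓ.val ℓ'.val ht (hlt ℓ) (hlt ℓ') h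
    exact congrArg (fun x => some (x, true)) (Fin.ext h5)
  | some (ℓ, false), some (ℓ', true) =>
    exact absurd h (aw_ne_sw t ℓ.val ℓ'.val ht (hlt ℓ) (hlt ℓ'))
  | some (ℓ, true), some (ℓ', false) =>
    exact absurd h.symm (aw_ne_sw t ℓ'.val ℓ.val ht (hlt ℓ') (hlt ℓ))

lemma PHI_ballEnc_surj (t n : ℕ) [NeZero n] (hn : n = 3*t+1) (ht : 1 ≤ t) :
    Function.Surjective (fun c : Option (Fin n × Bool) => PHI t n (ballEnc c)) := by
  have hcard : Fintype.card (Option (Fin n × Bool)) =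
      Fintype.card (ZMod 3 × ZMod (2*t+1)) := by
    rw [Fintype.card_option, Fintype.card_prod, Fintype.card_fin, Fintype.card_bool,
      Fintype.card_prod, ZMod.card, ZMod.card]
    omega
  exact Function.Injective.surjective_of_finite
    (Fintype.equivOfCardEq hcard) (PHI_ballEnc_inj t n hn ht)


end Stmt7Aux

namespace Stmt7Aux

lemma fin_succ_val_ne {n : ℕ} [NeZero n] (hn : 4 ≤ n) (ℓ : Fin n) : (ℓ + 1).val ≠ ℓ.val := by
  rw [fin_add_one_val hn]
  rcases (by omega : ℓ.val + 1 < n ∨ ℓ.val + 1 = n) with h | h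
  · rw [Nat.mod_eq_of_lt h]; omega
  · rw [h, Nat.mod_self]; omega

lemma fin_succ_cast {n : ℕ} [NeZero n] (hn : 4 ≤ n) (ℓ : Fin n) :
    (((ℓ + 1).val : ℕ) : ZMod n) = ((ℓ.val : ℕ) : ZMod n) + 1 := by
  rw [fin_add_one_val hn, ZMod.natCast_mod]
  push_cast
  ring

lemma mem_ball_iff {n : ℕ} [NeZero n] (hn : 4 ≤ n) (e : Fin n → ℤ) :
    e ∈ cyclicBall n 2 1 0 ↔ ∃ c : Option (Fin n × Bool), e = ballEnc c := by
  constructor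
  · rintro ⟨hb, i, hi⟩
    have hb' : ∀ ℓ, e ℓ = 0 ∨ e ℓ = 1 := by
      intro ℓ; have := hb ℓ; push_cast at this; omega
    have hk : i.val < n := ZMod.val_lt i
    set ℓ₀ : Fin n := ⟨i.val, hk⟩ with hℓ₀
    set ℓ₁ : Fin n := ℓ₀ + 1 with hℓ₁
    have hval : ∀ m : Fin n, ((m.val : ℕ) : ZMod n).val = m.val :=
      fun m => ZMod.val_cast_of_lt m.isLt
    have hcast0 : ((ℓ₀.val : ℕ) : ZMod n) = i := by
      show ((i.val : ℕ) : ZMod n) = i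
      rw [ZMod.natCast_val, ZMod.cast_id]
    have hcast1 : ((ℓ₁.val : ℕ) : ZMod n) = i + 1 := by
      rw [fin_succ_cast hn, hcast0]
    have hne : ℓ₀ ≠ ℓ₁ := fun hEq => fin_succ_val_ne hn ℓ₀ (congrArg Fin.val hEq).symm
    have hzero : ∀ m : Fin n, m ≠ ℓ₀ → m ≠ ℓ₁ → e m = 0 := by
      intro m h0 h1
      apply hi
      intro j hj
      rcases (by omega : j = 0 ∨ j = 1) with rfl | rfl
      · rw [Nat.cast_zero, add_zero]
        intro hEq
        apply h0
        apply Fin.ext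
        have h2 : (m.val : ZMod n) = ((ℓ₀.val : ℕ) : ZMod n) := by rw [hEq, hcast0]
        have h3 := congrArg ZMod.val h2
        rwa [hval m, hval ℓ₀] at h3
      · rw [Nat.cast_one]
        intro hEq
        apply h1
        apply Fin.ext
        have h2 : (m.val : ZMod n) = ((ℓ₁.val : ℕ) : ZMod n) := by rw [hEq, hcast1]
        have h3 := congrArg ZMod.val h2
        rwa [hval m, hval ℓ₁] at h3
    rcases hb' ℓ₀ with h0 | h0 <;> rcases hb' ℓ₁ with h1 | h1
    · refine ⟨none, funext fun m => ?_⟩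
      show e m = 0
      by_cases hm0 : m = ℓ₀
      · rw [hm0]; exact h0
      by_cases hm1 : m = ℓ₁
      · rw [hm1]; exact h1
      exact hzero m hm0 hm1
    · refine ⟨some (ℓ₁, false), funext fun m => ?_⟩
      show e m = sgl ℓ₁ m
      unfold sgl
      by_cases hm1 : m = ℓ₁
      · rw [if_pos hm1, hm1]; exact h1
      rw [if_neg hm1]
      by_cases hm0 : m = ℓ₀
      · rw [hm0]; exact h0
      exact hzero m hm0 hm1
    · refine ⟨some (ℓ₀, false), funext fun m => ?_⟩
      show e m = sgl ℓ₀ m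
      unfold sgl
      by_cases hm0 : m = ℓ₀
      · rw [if_pos hm0, hm0]; exact h0
      rw [if_neg hm0]
      by_cases hm1 : m = ℓ₁
      · rw [hm1]; exact h1
      exact hzero m hm0 hm1
    · refine ⟨some (ℓ₀, true), funext fun m => ?_⟩
      show e m = sgl ℓ₀ m + sgl (ℓ₀ + 1) m
      rw [← hℓ₁]
      unfold sgl
      by_cases hm0 : m = ℓ₀
      · rw [if_pos hm0, if_neg (by rw [hm0]; exact hne), hm0]; omega
      rw [if_neg hm0]
      by_cases hm1 : m = ℓ₁
      · rw [if_pos hm1, hm1]; omega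
      rw [if_neg hm1]
      rw [hzero m hm0 hm1]
      norm_num
  · rintro ⟨c, rfl⟩
    match c with
    | none =>
      refine ⟨fun ℓ => ?_, 0, fun ℓ _ => rfl⟩
      show -((0:ℕ):ℤ) ≤ (0:ℤ) ∧ (0:ℤ) ≤ ((1:ℕ):ℤ)
      norm_num
    | some (ℓ, false) =>
      refine ⟨fun m => ?_, ((ℓ.val : ℕ) : ZMod n), fun m hm => ?_⟩
      · show -((0:ℕ):ℤ) ≤ sgl ℓ m ∧ sgl ℓ m ≤ ((1:ℕ):ℤ)
        unfold sgl
        split_ifs <;> norm_num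
      · have h0 := hm 0 (by omega)
        rw [Nat.cast_zero, add_zero] at h0
        show sgl ℓ m = 0
        unfold sgl
        rw [if_neg]
        exact fun hEq => h0 (by rw [hEq])
    | some (ℓ, true) =>
      refine ⟨fun m => ?_, ((ℓ.val : ℕ) : ZMod n), fun m hm => ?_⟩
      · show -((0:ℕ):ℤ) ≤ sgl ℓ m + sgl (ℓ+1) m ∧ sgl ℓ m + sgl (ℓ+1) m ≤ ((1:ℕ):ℤ)
        have hne : ℓ ≠ ℓ + 1 := fun hEq => fin_succ_val_ne hn ℓ (congrArg Fin.val hEq).symm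
        unfold sgl
        split_ifs with hA hB <;> first
          | (exact absurd (hA.symm.trans hB) hne)
          | norm_num
      · have h0 := hm 0 (by omega)
        rw [Nat.cast_zero, add_zero] at h0
        have h1 := hm 1 (by omega)
        rw [Nat.cast_one] at h1
        show sgl ℓ m + sgl (ℓ+1) m = 0
        unfold sgl
        rw [if_neg (fun hEq => h0 (by rw [hEq])), if_neg, add_zero]
        intro hEq
        apply h1
        rw [hEq, fin_succ_cast hn]

end Stmt7Aux

open Stmt7Aux in
/-- For every `n ≥ 4` with `n ≡ 1` or `4 (mod 6)`, there is a lattice tiling of `ℤ^n` by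
the cyclic error ball `E°(n,2,1,0)`, i.e., a perfect lattice code correcting a single
cyclic `2`-burst of `(1,0)`-limited-magnitude errors. -/
theorem stmt7 (n : ℕ) (hn : 4 ≤ n) (hmod : n % 6 = 1 ∨ n % 6 = 4) :
    ∃ Λ : AddSubgroup (Fin n → ℤ), IsLatticeTiling Λ (cyclicBall n 2 1 0) := by
  obtain ⟨t, ht1, hnt⟩ : ∃ t, 1 ≤ t ∧ n = 3*t+1 := ⟨n/3, by omega, by omega⟩
  subst hnt
  haveI : NeZero (3*t+1) := ⟨by omega⟩
  have h4 : 4 ≤ 3*t+1 := by omega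
  refine ⟨(PHI t (3*t+1)).ker, ?_, ?_⟩
  · intro v hv w hw hvw
    rw [Set.disjoint_left]
    rintro x ⟨e, he, rfl⟩ ⟨e', he', hx⟩
    obtain ⟨c, rfl⟩ := (mem_ball_iff h4 e).mp he
    obtain ⟨c', rfl⟩ := (mem_ball_iff h4 e').mp he'
    have hv0 : PHI t (3*t+1) v = 0 := AddMonoidHom.mem_ker.mp hv
    have hw0 : PHI t (3*t+1) w = 0 := AddMonoidHom.mem_ker.mp hw
    have hphi : PHI t (3*t+1) (ballEnc c') = PHI t (3*t+1) (ballEnc c) := by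
      have h5 := congrArg (PHI t (3*t+1)) hx
      rwa [map_add, map_add, hv0, hw0, zero_add, zero_add] at h5
    have hcc : c' = c := PHI_ballEnc_inj t (3*t+1) rfl ht1 hphi
    rw [hcc] at hx
    exact hvw (add_right_cancel hx).symm
  · ext x
    simp only [Set.mem_iUnion, Set.mem_image, Set.mem_univ, iff_true, SetLike.mem_coe]
    obtain ⟨c, hc⟩ := PHI_ballEnc_surj t (3*t+1) rfl ht1 (PHI t (3*t+1) x)
    refine ⟨x - ballEnc c, ?_, ballEnc c, (mem_ball_iff h4 _).mpr ⟨c, rfl⟩, ?_⟩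
    · rw [AddMonoidHom.mem_ker, map_sub,
        show (PHI t (3*t+1)) (ballEnc c) = (PHI t (3*t+1)) x from hc, sub_self]
    · exact sub_add_cancel x (ballEnc c)
end

section
/- Let b ≥ 1 and k₊ ≥ k₋ ≥ 0 be integers, set e = (k₊+k₋)(k₊+k₋+1)^{b−1}, let q be a prime power with e | q−1, and let n = (q−1)/e with n ≥ 2b−1. Let α be a primitive element of 𝔽_q, and let 𝓕 be the set of polynomials c_0 + c_1 x^e + c_2 x^{2e} + ⋯ + c_{b−1} x^{(b−1)e} over 𝔽_q with (c_0,…,c_{b−1}) ∈ [−k₋,k₊]^b and c_0 ≠ 0. Suppose f(α) ≠ 0 for all f ∈ 𝓕 and that {log_α(f(α)) mod e : f ∈ 𝓕} = {0, 1, …, e−1}. Then the cyclic error ball E°(n,b,k₊,k₋) splits the additive group of 𝔽_q with splitting sequence s_α = (α^0, α^e, α^{2e}, …, α^{(n−1)e}). -/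
lemma stmt10_pow_iff {F : Type*} [Field F] [Fintype F] {α : F}
    (hα : orderOf α = Fintype.card F - 1) (a a' : ℕ) :
    α ^ a = α ^ a' ↔ a ≡ a' [MOD Fintype.card F - 1] := by
  have hq2 : 2 ≤ Fintype.card F := Fintype.one_lt_card
  have hα0 : α ≠ 0 := by
    intro h0
    have h1 := pow_orderOf_eq_one α
    rw [hα, h0, zero_pow (by omega : Fintype.card F - 1 ≠ 0)] at h1
    exact zero_ne_one h1
  set u : Fˣ := Units.mk0 α hα0 with hu
  have hcoe : (u : F) = α := rfl
  have hou : orderOf u = Fintype.card F - 1 := by rw [← hα, ← hcoe, orderOf_units]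
  have h2 : (α ^ a = α ^ a') ↔ u ^ a = u ^ a' := by
    rw [Units.ext_iff, Units.val_pow_eq_pow_val, Units.val_pow_eq_pow_val, hcoe]
  rw [h2, pow_eq_pow_iff_modEq, hou]

lemma stmt10_exists_pow {F : Type*} [Field F] [Fintype F] {α : F}
    (hα : orderOf α = Fintype.card F - 1) {z : F} (hz : z ≠ 0) :
    ∃ a : ℕ, α ^ a = z := by
  have hq2 : 2 ≤ Fintype.card F := Fintype.one_lt_card
  have hα0 : α ≠ 0 := by
    intro h0
    have h1 := pow_orderOf_eq_one α
    rw [hα, h0, zero_pow (by omega : Fintype.card F - 1 ≠ 0)] at h1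
    exact zero_ne_one h1
  set u : Fˣ := Units.mk0 α hα0 with hu
  have hcoe : (u : F) = α := rfl
  have hou : orderOf u = Fintype.card F - 1 := by rw [← hα, ← hcoe, orderOf_units]
  have hcard : Nat.card Fˣ = Fintype.card F - 1 := by
    rw [Nat.card_units, Nat.card_eq_fintype_card]
  have htop : Subgroup.zpowers u = ⊤ :=
    Subgroup.eq_top_of_card_eq _ (by rw [Nat.card_zpowers, hou, hcard])
  have hm : Units.mk0 z hz ∈ Submonoid.powers u := by
    rw [mem_powers_iff_mem_zpowers, htop]; trivial
  obtain ⟨m, hm⟩ := hm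
  exact ⟨m, by simpa [Units.val_pow_eq_pow_val, hcoe] using congrArg Units.val hm⟩

/-- The generic field construction: let `e = (k₊+k₋)(k₊+k₋+1)^{b−1}` divide `q−1`,
`n = (q−1)/e ≥ 2b−1`, and let `α` be a primitive element of `𝔽_q` such that all elements
`f(α) = Σ_{i<b} cᵢ α^{ie}` (with `cᵢ ∈ [−k₋,k₊]`, `c₀ ≠ 0`) are nonzero and their discrete
logarithms attain all residues modulo `e`.  Then `E°(n,b,k₊,k₋)` splits the additive group
of `𝔽_q` with the splitting sequence `(α⁰, α^e, …, α^{(n−1)e})`. -/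
theorem stmt10 (F : Type*) [Field F] [Fintype F] (b kp km e n : ℕ)
    (hb : 1 ≤ b) (hkm : km ≤ kp)
    (he : e = (kp + km) * (kp + km + 1) ^ (b - 1))
    (hdvd : e ∣ Fintype.card F - 1)
    (hn : n = (Fintype.card F - 1) / e)
    (hn2 : 2 * b - 1 ≤ n)
    (α : F) (hα : orderOf α = Fintype.card F - 1)
    (hF0 : ∀ c : Fin b → ℤ, (∀ i, -(km : ℤ) ≤ c i ∧ c i ≤ (kp : ℤ)) → c ⟨0, hb⟩ ≠ 0 →
      (∑ i : Fin b, (c i : F) * α ^ (e * (i : ℕ))) ≠ 0)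
    (hlog : ∀ r < e, ∃ c : Fin b → ℤ, (∀ i, -(km : ℤ) ≤ c i ∧ c i ≤ (kp : ℤ)) ∧
      c ⟨0, hb⟩ ≠ 0 ∧ ∃ a : ℕ, a % e = r ∧
        α ^ a = ∑ i : Fin b, (c i : F) * α ^ (e * (i : ℕ))) :
    Splits (cyclicBall n b kp km) (fun i : Fin n => α ^ (e * (i : ℕ))) := by
  classical
  have hq2 : 2 ≤ Fintype.card F := Fintype.one_lt_card
  have he0 : e ≠ 0 := by
    rintro rfl
    have := Nat.eq_zero_of_zero_dvd hdvd
    omega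
  have hen : e * n = Fintype.card F - 1 := by
    rw [hn]; exact Nat.mul_div_cancel' hdvd
  have hn0 : 0 < n := by
    rcases Nat.eq_zero_or_pos n with h | h
    · rw [h, mul_zero] at hen; omega
    · exact h
  haveI : NeZero n := ⟨hn0.ne'⟩
  haveI : NeZero e := ⟨he0⟩
  have hbn : b ≤ n := by omega
  have hα0 : α ≠ 0 := by
    intro h0
    have h1 := pow_orderOf_eq_one α
    rw [hα, h0, zero_pow (by omega : Fintype.card F - 1 ≠ 0)] at h1
    exact zero_ne_one h1
  have hpow_iff := stmt10_pow_iff hα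
  -- α^(e*m) depends only on m mod n
  have hαen : ∀ m m' : ℕ, m % n = m' % n → α ^ (e * m) = α ^ (e * m') := by
    intro m m' h
    refine (hpow_iff _ _).mpr ?_
    rw [← hen]
    exact Nat.ModEq.mul_left' e h
  set P : (Fin b → ℤ) → F := fun c => ∑ i : Fin b, (c i : F) * α ^ (e * (i : ℕ)) with hP
  set idx : ZMod n → Fin n := fun i => ⟨i.val, i.val_lt⟩ with hidx
  have hidxval : ∀ i : ZMod n, ((idx i).val : ZMod n) = i := by
    intro i
    rw [hidx]
    simp [ZMod.natCast_val, ZMod.cast_id]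
  have hidx_eq : ∀ (ℓ : Fin n) (i : ZMod n), ((ℓ.val : ZMod n) = i) → ℓ = idx i := by
    intro ℓ i h
    have : ℓ.val = i.val := by
      rw [← h, ZMod.val_natCast_of_lt ℓ.isLt]
    exact Fin.ext this
  -- the sum over a windowed vector
  have hsum : ∀ (x : Fin n → ℤ) (i : ZMod n),
      (∀ ℓ : Fin n, (∀ j : ℕ, j < b → ((ℓ.val : ZMod n) ≠ i + (j : ZMod n))) → x ℓ = 0) →
      ∑ ℓ : Fin n, x ℓ • α ^ (e * (ℓ : ℕ)) =
        α ^ (e * i.val) * P (fun j : Fin b => x (idx (i + (j.val : ZMod n)))) := by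
    intro x i hwin
    set φ : Fin b → Fin n := fun j => idx (i + (j.val : ZMod n)) with hφ
    have hφinj : Function.Injective φ := by
      intro j j' h
      have h1 : i + (j.val : ZMod n) = i + (j'.val : ZMod n) := by
        have := congrArg (fun ℓ : Fin n => ((ℓ.val : ZMod n))) h
        simpa [hφ, hidxval] using this
      have h2 : (j.val : ZMod n) = (j'.val : ZMod n) := by
        exact add_left_cancel h1
      have h3 : j.val = j'.val := by
        have := congrArg ZMod.val h2
        rwa [ZMod.val_natCast_of_lt (lt_of_lt_of_le j.isLt hbn),
          ZMod.val_natCast_of_lt (lt_of_lt_of_le j'.isLt hbn)] at this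
      exact Fin.ext h3
    have hstep : ∑ ℓ : Fin n, x ℓ • α ^ (e * (ℓ : ℕ)) =
        ∑ ℓ ∈ Finset.image φ Finset.univ, x ℓ • α ^ (e * (ℓ : ℕ)) := by
      refine (Finset.sum_subset (Finset.subset_univ _) ?_).symm
      intro ℓ _ hℓ
      have hx0 : x ℓ = 0 := by
        refine hwin ℓ ?_
        intro j hj habs
        refine hℓ ?_
        rw [Finset.mem_image]
        exact ⟨⟨j, hj⟩, Finset.mem_univ _, (hidx_eq ℓ _ habs).symm⟩
      rw [hx0, zero_smul]
    rw [hstep, Finset.sum_image (fun a _ a' _ h => hφinj h)]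
    have hφpow : ∀ j : Fin b, α ^ (e * (φ j).val) = α ^ (e * i.val) * α ^ (e * j.val) := by
      intro j
      have h1 : (φ j).val % n = (i.val + j.val) % n := by
        rw [hφ]
        show (idx (i + (j.val : ZMod n))).val % n = _
        rw [hidx]
        show (i + (j.val : ZMod n)).val % n = _
        rw [Nat.mod_eq_of_lt (ZMod.val_lt _), ZMod.val_add,
          ZMod.val_natCast_of_lt (lt_of_lt_of_le j.isLt hbn)]
      rw [hαen _ _ h1, mul_add, pow_add]
    calc ∑ j : Fin b, x (φ j) • α ^ (e * (φ j).val)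
        = ∑ j : Fin b, (x (φ j) : F) * (α ^ (e * i.val) * α ^ (e * j.val)) := by
          refine Finset.sum_congr rfl fun j _ => ?_
          rw [hφpow j, zsmul_eq_mul]
      _ = α ^ (e * i.val) * ∑ j : Fin b, (x (φ j) : F) * α ^ (e * j.val) := by
          rw [Finset.mul_sum]
          exact Finset.sum_congr rfl fun j _ => by ring
      _ = α ^ (e * i.val) * P (fun j : Fin b => x (idx (i + (j.val : ZMod n)))) := rfl
  -- normalization: window can start at a nonzero coordinate
  have hnorm : ∀ x : Fin n → ℤ, x ∈ cyclicBall n b kp km → x ≠ 0 →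
      ∃ i : ZMod n,
        (∀ ℓ : Fin n, (∀ j : ℕ, j < b → ((ℓ.val : ZMod n) ≠ i + (j : ZMod n))) → x ℓ = 0) ∧
        x (idx i) ≠ 0 := by
    intro x hx hx0
    obtain ⟨hbd, i₀, hwin⟩ := hx
    have hQ : ∃ j : ℕ, j < b ∧ x (idx (i₀ + (j : ZMod n))) ≠ 0 := by
      obtain ⟨ℓ, hℓ⟩ : ∃ ℓ, x ℓ ≠ 0 := Function.ne_iff.mp hx0
      by_contra hcon
      push_neg at hcon
      refine hℓ (hwin ℓ ?_)
      intro j hj habs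
      exact hℓ (by rw [hidx_eq ℓ _ habs]; exact hcon j hj)
    set j₀ := Nat.find hQ with hj₀
    obtain ⟨hj₀b, hj₀x⟩ := Nat.find_spec hQ
    refine ⟨i₀ + (j₀ : ZMod n), ?_, hj₀x⟩
    intro ℓ hℓ
    by_contra hxℓ
    obtain ⟨j, hj, hje⟩ : ∃ j : ℕ, j < b ∧ (ℓ.val : ZMod n) = i₀ + (j : ZMod n) := by
      by_contra hcon
      push_neg at hcon
      exact hxℓ (hwin ℓ fun j hj => hcon j hj)
    have hQj : j₀ ≤ j := by
      refine Nat.find_min' hQ ⟨hj, ?_⟩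
      rw [← hidx_eq ℓ _ hje]; exact hxℓ
    refine hℓ (j - j₀) (by omega) ?_
    rw [hje]
    have : ((j₀ : ZMod n) + ((j - j₀ : ℕ) : ZMod n)) = (j : ZMod n) := by
      rw [← Nat.cast_add]
      congr 1
      omega
    rw [add_assoc, this]
  -- the finite family of coefficient vectors
  set S : Finset (Fin b → ℤ) := Fintype.piFinset fun i : Fin b =>
    if i = (⟨0, hb⟩ : Fin b) then (Finset.Icc (-(km : ℤ)) (kp : ℤ)).erase 0
    else Finset.Icc (-(km : ℤ)) (kp : ℤ) with hS
  have hmemS : ∀ c : Fin b → ℤ,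
      c ∈ S ↔ ((∀ i, -(km : ℤ) ≤ c i ∧ c i ≤ (kp : ℤ)) ∧ c ⟨0, hb⟩ ≠ 0) := by
    intro c
    rw [hS, Fintype.mem_piFinset]
    constructor
    · intro h
      constructor
      · intro i
        have hh := h i
        by_cases hi : i = (⟨0, hb⟩ : Fin b)
        · rw [if_pos hi, Finset.mem_erase, Finset.mem_Icc] at hh
          exact hh.2
        · rw [if_neg hi, Finset.mem_Icc] at hh
          exact hh
      · have hh := h ⟨0, hb⟩
        rw [if_pos rfl, Finset.mem_erase] at hh
        exact hh.1
    · rintro ⟨h1, h2⟩ i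
      by_cases hi : i = (⟨0, hb⟩ : Fin b)
      · subst hi
        rw [if_pos rfl, Finset.mem_erase, Finset.mem_Icc]
        exact ⟨h2, (h1 _).1, (h1 _).2⟩
      · rw [if_neg hi, Finset.mem_Icc]
        exact ⟨(h1 i).1, (h1 i).2⟩
  have hScard : S.card = e := by
    rw [hS, Fintype.card_piFinset]
    have hIcc : (Finset.Icc (-(km : ℤ)) (kp : ℤ)).card = kp + km + 1 := by
      rw [Int.card_Icc]
      omega
    have h0mem : (0 : ℤ) ∈ Finset.Icc (-(km : ℤ)) (kp : ℤ) := by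
      rw [Finset.mem_Icc]
      constructor <;> simp
    obtain ⟨m, rfl⟩ : ∃ m, b = m + 1 := ⟨b - 1, by omega⟩
    rw [Fin.prod_univ_succ]
    have h00 : ((0 : Fin (m + 1)) = (⟨0, hb⟩ : Fin (m + 1))) := rfl
    rw [if_pos h00]
    have hfac : ∀ j : Fin m, (if (j.succ : Fin (m+1)) = (⟨0, hb⟩ : Fin (m + 1))
        then (Finset.Icc (-(km : ℤ)) (kp : ℤ)).erase 0
        else Finset.Icc (-(km : ℤ)) (kp : ℤ)).card = kp + km + 1 := by
      intro j
      rw [if_neg, hIcc]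
      exact Fin.succ_ne_zero j
    rw [Finset.card_erase_of_mem h0mem, hIcc]
    calc (kp + km + 1 - 1) * ∏ j : Fin m, (if (j.succ : Fin (m+1)) = (⟨0, hb⟩ : Fin (m + 1))
          then (Finset.Icc (-(km : ℤ)) (kp : ℤ)).erase 0
          else Finset.Icc (-(km : ℤ)) (kp : ℤ)).card
        = (kp + km) * ∏ _j : Fin m, (kp + km + 1) := by
          rw [Finset.prod_congr rfl fun j _ => hfac j]
          congr 1
      _ = e := by
          rw [Finset.prod_const, he]
          simp [Finset.card_univ]
  -- discrete-log-mod-e function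
  set g : (Fin b → ℤ) → ZMod e := fun c =>
    if h : ∃ a : ℕ, α ^ a = P c then ((Classical.choose h : ℕ) : ZMod e) else 0 with hg
  have hgspec : ∀ (c : Fin b → ℤ) (a : ℕ), α ^ a = P c → g c = (a : ZMod e) := by
    intro c a ha
    have h : ∃ a' : ℕ, α ^ a' = P c := ⟨a, ha⟩
    have h1 : g c = ((Classical.choose h : ℕ) : ZMod e) := by
      rw [hg]; exact dif_pos h
    rw [h1]
    have h2 := Classical.choose_spec h
    have h3 : Classical.choose h ≡ a [MOD Fintype.card F - 1] :=
      (hpow_iff _ _).mp (h2.trans ha.symm)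
    exact (ZMod.natCast_eq_natCast_iff _ _ _).mpr (h3.of_dvd hdvd)
  have hginj : Set.InjOn g ↑S := by
    rw [← Finset.card_image_iff]
    have himg : S.image g = Finset.univ := by
      refine Finset.eq_univ_of_forall fun r => ?_
      rw [Finset.mem_image]
      obtain ⟨c, hcb, hc0, a, hae, hpa⟩ := hlog r.val (ZMod.val_lt r)
      refine ⟨c, (hmemS c).mpr ⟨hcb, hc0⟩, ?_⟩
      rw [hgspec c a hpa]
      calc (a : ZMod e) = ((a % e : ℕ) : ZMod e) := (ZMod.natCast_mod a e).symm
        _ = ((r.val : ℕ) : ZMod e) := by rw [hae]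
        _ = r := by simp
    rw [himg, hScard, Finset.card_univ, ZMod.card]
  -- the main argument
  intro x hx y hy hxy
  have hxy' : ∑ ℓ : Fin n, x ℓ • α ^ (e * (ℓ : ℕ)) = ∑ ℓ : Fin n, y ℓ • α ^ (e * (ℓ : ℕ)) := hxy
  by_cases hx0 : x = 0
  · by_cases hy0 : y = 0
    · rw [hx0, hy0]
    · exfalso
      obtain ⟨j, hwy, hj0⟩ := hnorm y hy hy0
      have hzero : (0 : F) = α ^ (e * j.val) * P (fun t : Fin b => y (idx (j + (t.val : ZMod n)))) := by
        rw [← hsum y j hwy, ← hxy']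
        simp [hx0]
      have hPne : P (fun t : Fin b => y (idx (j + (t.val : ZMod n)))) ≠ 0 := by
        refine hF0 _ (fun t => hy.1 _) ?_
        simpa using hj0
      exact (mul_ne_zero (pow_ne_zero _ hα0) hPne) hzero.symm
  · by_cases hy0 : y = 0
    · exfalso
      obtain ⟨i, hwx, hi0⟩ := hnorm x hx hx0
      have hzero : (0 : F) = α ^ (e * i.val) * P (fun t : Fin b => x (idx (i + (t.val : ZMod n)))) := by
        rw [← hsum x i hwx, hxy']
        simp [hy0]
      have hPne : P (fun t : Fin b => x (idx (i + (t.val : ZMod n)))) ≠ 0 := by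
        refine hF0 _ (fun t => hx.1 _) ?_
        simpa using hi0
      exact (mul_ne_zero (pow_ne_zero _ hα0) hPne) hzero.symm
    · obtain ⟨i, hwx, hi0⟩ := hnorm x hx hx0
      obtain ⟨j, hwy, hj0⟩ := hnorm y hy hy0
      set c : Fin b → ℤ := fun t => x (idx (i + (t.val : ZMod n))) with hc
      set d : Fin b → ℤ := fun t => y (idx (j + (t.val : ZMod n))) with hd
      have heq : α ^ (e * i.val) * P c = α ^ (e * j.val) * P d := by
        rw [← hsum x i hwx, ← hsum y j hwy]
        exact hxy'
      have hc0 : c ⟨0, hb⟩ ≠ 0 := by simpa [hc] using hi0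
      have hd0 : d ⟨0, hb⟩ ≠ 0 := by simpa [hd] using hj0
      have hcS : c ∈ S := (hmemS c).mpr ⟨fun t => hx.1 _, hc0⟩
      have hdS : d ∈ S := (hmemS d).mpr ⟨fun t => hy.1 _, hd0⟩
      have hPc : P c ≠ 0 := hF0 c (fun t => hx.1 _) hc0
      have hPd : P d ≠ 0 := hF0 d (fun t => hy.1 _) hd0
      obtain ⟨ac, hac⟩ := stmt10_exists_pow hα hPc
      obtain ⟨ad, had⟩ := stmt10_exists_pow hα hPd
      have hpow : α ^ (e * i.val + ac) = α ^ (e * j.val + ad) := by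
        rw [pow_add, pow_add, hac, had]
        exact heq
      have hmod : ac ≡ ad [MOD e] := by
        have h1 := ((hpow_iff _ _).mp hpow).of_dvd hdvd
        have h3 : e * i.val ≡ e * j.val [MOD e] := by
          unfold Nat.ModEq
          simp [Nat.mul_mod_right]
        exact Nat.ModEq.add_left_cancel h3 h1
      have hgcd : g c = g d := by
        rw [hgspec c ac hac, hgspec d ad had]
        exact (ZMod.natCast_eq_natCast_iff _ _ _).mpr hmod
      have hcd : c = d := hginj hcS hdS hgcd
      have hij : i = j := by
        have h1 : α ^ (e * i.val) = α ^ (e * j.val) := by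
          have h2 := heq
          rw [hcd] at h2
          exact mul_right_cancel₀ hPd h2
        have h2 := (hpow_iff _ _).mp h1
        rw [← hen] at h2
        have h3 : i.val ≡ j.val [MOD n] := Nat.ModEq.mul_left_cancel' he0 h2
        have h4 : i.val = j.val := by
          have h5 := h3
          rwa [Nat.ModEq, Nat.mod_eq_of_lt (ZMod.val_lt i), Nat.mod_eq_of_lt (ZMod.val_lt j)] at h5
        exact ZMod.val_injective n h4
      funext ℓ
      by_cases hw : ∀ t : ℕ, t < b → ((ℓ.val : ZMod n) ≠ i + (t : ZMod n))
      · rw [hwx ℓ hw, hwy ℓ (hij ▸ hw)]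
      · push_neg at hw
        obtain ⟨t, ht, hte⟩ := hw
        have hℓ : ℓ = idx (i + (t : ZMod n)) := hidx_eq ℓ _ hte
        have h1 : x ℓ = c ⟨t, ht⟩ := by rw [hℓ, hc]
        have h2 : y ℓ = d ⟨t, ht⟩ := by rw [hℓ, hij, hd]
        rw [h1, h2, hcd]
end

section
/- Let q = 12m+1 be a prime power with m odd, let n = 2m with n ≥ 3, and let α be a primitive element of 𝔽_q. Define r_α ∈ (𝔽_q)^n by r_{2j+1} = α^{12j} and r_{2j+2} = α^{12j+3} for 0 ≤ j ≤ m−1, and let 𝓕 = {±1, ±x^3, ±(1+x^3), ±(1−x^3), ±(x^3+x^{12}), ±(x^3−x^{12})} (twelve polynomials over 𝔽_q). Suppose f(α) ≠ 0 for all f ∈ 𝓕 and that {log_α(f(α)) mod 12 : f ∈ 𝓕} = {0, 1, 2, …, 11}. Then the cyclic error ball E°(n,2,1,1) splits the additive group of 𝔽_q with splitting sequence r_α. -/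
namespace Stmt17Aux

def V (n : ℕ) (p : ℕ) (a b : ℤ) : Fin n → ℤ :=
  fun t => if t.val = p then a else if t.val = (p + 1) % n then b else 0

def idx (par : ℕ) (a b : ℤ) : Fin 12 :=
  if par = 0 then
    if b = 0 then (if a = 1 then 0 else 1)
    else if a = 1 then (if b = 1 then 4 else 6)
    else (if b = 1 then 7 else 5)
  else
    if b = 0 then (if a = 1 then 2 else 3)
    else if a = 1 then (if b = 1 then 8 else 10)
    else (if b = 1 then 11 else 9)

lemma idx_inj {par par' : ℕ} {a b a' b' : ℤ}
    (hp : par = 0 ∨ par = 1) (hp' : par' = 0 ∨ par' = 1)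
    (ha : a = 1 ∨ a = -1) (ha' : a' = 1 ∨ a' = -1)
    (hb : b = 1 ∨ b = 0 ∨ b = -1) (hb' : b' = 1 ∨ b' = 0 ∨ b' = -1)
    (h : idx par a b = idx par' a' b') : par = par' ∧ a = a' ∧ b = b' := by
  rcases hp with rfl|rfl <;> rcases hp' with rfl|rfl <;>
  rcases ha with rfl|rfl <;> rcases ha' with rfl|rfl <;>
  rcases hb with rfl|rfl|rfl <;> rcases hb' with rfl|rfl|rfl <;>
  revert h <;> decide

lemma mod_succ_char {p n : ℕ} (h : p < n) : (p + 1) % n = if p + 1 = n then 0 else p + 1 := by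
  split
  · next h1 => rw [h1, Nat.mod_self]
  · next h1 => exact Nat.mod_eq_of_lt (by omega)

lemma sum_V {M : Type*} [AddCommGroup M] {n p : ℕ} (hp : p < n) (hn : 3 ≤ n)
    (a b : ℤ) (r : Fin n → M) :
    ∑ t, V n p a b t • r t
      = a • r ⟨p, hp⟩ + b • r ⟨(p + 1) % n, Nat.mod_lt _ (by omega)⟩ := by
  set P : Fin n := ⟨p, hp⟩
  set Q : Fin n := ⟨(p + 1) % n, Nat.mod_lt _ (by omega)⟩
  have hPQ : P ≠ Q := by
    have := mod_succ_char hp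
    simp only [P, Q, Ne, Fin.ext_iff]
    rw [this]; split <;> omega
  have hrw : ∀ t : Fin n, V n p a b t • r t
      = (if t = P then a • r t else 0) + (if t = Q then b • r t else 0) := by
    intro t
    by_cases h1 : t = P
    · subst h1
      simp [V, if_neg hPQ, show P.val = p from rfl]
    · by_cases h2 : t = Q
      · subst h2
        have h3 : Q.val ≠ p := by
          intro hc; exact h1 (Fin.ext hc)
        simp [V, h3, h1, show Q.val = (p + 1) % n from rfl, show (p + 1) % n ≠ p from h3]
      · have h3 : t.val ≠ p := fun hc => h1 (Fin.ext hc)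
        have h4 : t.val ≠ (p + 1) % n := fun hc => h2 (Fin.ext hc)
        simp [V, h3, h4, h1, h2]
  rw [Finset.sum_congr rfl (fun t _ => hrw t), Finset.sum_add_distrib,
    Finset.sum_ite_eq' Finset.univ P (fun t => a • r t),
    Finset.sum_ite_eq' Finset.univ Q (fun t => b • r t)]
  simp

end Stmt17Aux

open Stmt17Aux in
/-- Modified construction: let `q = 12m+1` be a prime power with `m` odd, `n = 2m ≥ 3`,
and `α` a primitive element of `𝔽_q`.  Consider the twelve values
`±1, ±α³, ±(1+α³), ±(1−α³), ±(α³+α¹²), ±(α³−α¹²)`; if all are nonzero and their discrete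
logarithms attain all residues modulo `12`, then `E°(n,2,1,1)` splits the additive group
of `𝔽_q` with the splitting sequence `r_α = (1, α³, α¹², α¹⁵, …, α^{12(m−1)}, α^{12(m−1)+3})`. -/
theorem stmt17 (F : Type*) [Field F] [Fintype F] (m : ℕ) (hmo : Odd m)
    (hq : Fintype.card F = 12 * m + 1) (hn : 3 ≤ 2 * m)
    (α : F) (hα : orderOf α = Fintype.card F - 1)
    (vals : Fin 12 → F)
    (hvals : vals = ![1, -1, α ^ 3, -(α ^ 3), 1 + α ^ 3, -(1 + α ^ 3),
      1 - α ^ 3, -(1 - α ^ 3), α ^ 3 + α ^ 12, -(α ^ 3 + α ^ 12),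
      α ^ 3 - α ^ 12, -(α ^ 3 - α ^ 12)])
    (hne : ∀ i, vals i ≠ 0)
    (hlog : ∀ r < 12, ∃ i : Fin 12, ∃ a : ℕ, a % 12 = r ∧ α ^ a = vals i) :
    Splits (cyclicBall (2 * m) 2 1 1)
      (fun t : Fin (2 * m) =>
        if t.val % 2 = 0 then α ^ (12 * (t.val / 2))
        else α ^ (12 * (t.val / 2) + 3)) := by
  classical
  have hm2 : 2 ≤ m := by omega
  set s : Fin (2 * m) → F := fun t =>
    if t.val % 2 = 0 then α ^ (12 * (t.val / 2)) else α ^ (12 * (t.val / 2) + 3) with hs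
  have hord : orderOf α = 12 * m := by rw [hα, hq]; omega
  have hα1 : α ^ (12 * m) = 1 := by rw [← hord]; exact pow_orderOf_eq_one α
  have hα0 : α ≠ 0 := by
    intro h
    rw [h, zero_pow (by omega)] at hα1
    exact zero_ne_one hα1
  have hpow : ∀ a b : ℕ, α ^ a = α ^ b ↔ a ≡ b [MOD 12 * m] := by
    intro a b
    set u : Fˣ := Units.mk0 α hα0 with hu
    have hcoe : ∀ k : ℕ, ((u ^ k : Fˣ) : F) = α ^ k := by
      intro k; rw [Units.val_pow_eq_pow_val]; rfl
    have h1 : α ^ a = α ^ b ↔ u ^ a = u ^ b := by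
      constructor
      · intro h; exact Units.ext (by rw [hcoe, hcoe]; exact h)
      · intro h; rw [← hcoe, ← hcoe, h]
    have h2 : orderOf u = 12 * m := by
      rw [← hord, ← orderOf_units]; rfl
    rw [h1, pow_eq_pow_iff_modEq, h2]
  -- discrete logs
  have hc : ∀ i : Fin 12, ∃ a : ℕ, α ^ a = vals i := by
    intro i
    set u : Fˣ := Units.mk0 α hα0 with hu
    set v : Fˣ := Units.mk0 (vals i) (hne i) with hv
    have hou : orderOf u = Nat.card Fˣ := by
      have h1 : orderOf (u : F) = orderOf u := orderOf_units
      have h2 : Nat.card Fˣ = Fintype.card F - 1 := by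
        rw [Nat.card_eq_fintype_card, Fintype.card_units]
      rw [h2, ← hα, ← h1]
      rfl
    have htop : Subgroup.zpowers u = ⊤ := by
      apply Subgroup.eq_top_of_card_eq
      rw [Nat.card_zpowers, hou]
    have hmem : v ∈ Submonoid.powers u := by
      rw [mem_powers_iff_mem_zpowers, htop]
      trivial
    obtain ⟨a, ha⟩ := hmem
    exact ⟨a, by simpa [hu, hv, Units.ext_iff] using congrArg (Units.val) ha⟩
  choose c hcspec using hc
  have hginj : ∀ i i' : Fin 12, c i % 12 = c i' % 12 → i = i' := by
    have hsurj : Function.Surjective (fun i : Fin 12 => (⟨c i % 12, Nat.mod_lt _ (by norm_num)⟩ : Fin 12)) := by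
      intro r
      obtain ⟨i, a, ha12, hav⟩ := hlog r.val r.isLt
      refine ⟨i, ?_⟩
      have heq : α ^ a = α ^ (c i) := by rw [hav, hcspec]
      have hmq : a ≡ c i [MOD 12 * m] := (hpow _ _).mp heq
      have h12 : a % 12 = c i % 12 := Nat.ModEq.of_dvd ⟨m, rfl⟩ hmq
      exact Fin.ext (by simp [← h12, ha12])
    have := Finite.injective_iff_surjective.mpr hsurj
    intro i i' h
    exact this (Fin.ext h)
  -- value injectivity
  have hB : ∀ j j' : ℕ, ∀ i i' : Fin 12, j < m → j' < m →
      α ^ (12 * j) * vals i = α ^ (12 * j') * vals i' → j = j' ∧ i = i' := by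
    intro j j' i i' hj hj' heq
    rw [← hcspec i, ← hcspec i', ← pow_add, ← pow_add] at heq
    have hmq : 12 * j + c i ≡ 12 * j' + c i' [MOD 12 * m] := (hpow _ _).mp heq
    have h12 : (12 * j + c i) % 12 = (12 * j' + c i') % 12 := Nat.ModEq.of_dvd ⟨m, rfl⟩ hmq
    have hii : i = i' := hginj i i' (by omega)
    subst hii
    refine ⟨?_, rfl⟩
    have hjj : 12 * j ≡ 12 * j' [MOD 12 * m] := hmq.add_right_cancel' (c i)
    have e1 : 12 * j % (12 * m) = 12 * j := Nat.mod_eq_of_lt (by omega)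
    have e2 : 12 * j' % (12 * m) = 12 * j' := Nat.mod_eq_of_lt (by omega)
    have := hjj
    unfold Nat.ModEq at this
    omega
  -- sum computation
  have hS : ∀ p : ℕ, ∀ hp : p < 2 * m, ∀ a b : ℤ, (a = 1 ∨ a = -1) → (b = 1 ∨ b = 0 ∨ b = -1) →
      ∑ t, V (2 * m) p a b t • s t = α ^ (12 * (p / 2)) * vals (idx (p % 2) a b) := by
    have v0 : vals 0 = 1 := by rw [hvals]; rfl
    have v1 : vals 1 = -1 := by rw [hvals]; rfl
    have v2 : vals 2 = α ^ 3 := by rw [hvals]; rfl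
    have v3 : vals 3 = -(α ^ 3) := by rw [hvals]; rfl
    have v4 : vals 4 = 1 + α ^ 3 := by rw [hvals]; rfl
    have v5 : vals 5 = -(1 + α ^ 3) := by rw [hvals]; rfl
    have v6 : vals 6 = 1 - α ^ 3 := by rw [hvals]; rfl
    have v7 : vals 7 = -(1 - α ^ 3) := by rw [hvals]; rfl
    have v8 : vals 8 = α ^ 3 + α ^ 12 := by rw [hvals]; rfl
    have v9 : vals 9 = -(α ^ 3 + α ^ 12) := by rw [hvals]; rfl
    have v10 : vals 10 = α ^ 3 - α ^ 12 := by rw [hvals]; rfl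
    have v11 : vals 11 = -(α ^ 3 - α ^ 12) := by rw [hvals]; rfl
    intro p hp a b ha hb
    rw [sum_V hp (by omega) a b s]
    rcases Nat.mod_two_eq_zero_or_one p with hpar | hpar
    · -- p even
      have hq1 : (p + 1) % (2 * m) = p + 1 := Nat.mod_eq_of_lt (by omega)
      have e1 : s ⟨p, hp⟩ = α ^ (12 * (p / 2)) := by
        show (if p % 2 = 0 then α ^ (12 * (p / 2)) else α ^ (12 * (p / 2) + 3)) = _
        rw [if_pos hpar]
      have e2 : ∀ h : (p + 1) % (2 * m) < 2 * m,
          s ⟨(p + 1) % (2 * m), h⟩ = α ^ (12 * (p / 2) + 3) := by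
        intro h
        show (if (p + 1) % (2 * m) % 2 = 0 then α ^ (12 * ((p + 1) % (2 * m) / 2))
          else α ^ (12 * ((p + 1) % (2 * m) / 2) + 3)) = _
        rw [hq1, if_neg (by omega), show (p + 1) / 2 = p / 2 by omega]
      rw [e1, e2, hpar]
      rcases ha with rfl | rfl <;> rcases hb with rfl | rfl | rfl <;>
        norm_num [idx, v0, v1, v2, v3, v4, v5, v6, v7, zsmul_eq_mul] <;> ring
    · -- p odd
      have e1 : s ⟨p, hp⟩ = α ^ (12 * (p / 2) + 3) := by
        show (if p % 2 = 0 then α ^ (12 * (p / 2)) else α ^ (12 * (p / 2) + 3)) = _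
        rw [if_neg (by omega)]
      by_cases hlast : p + 1 = 2 * m
      · -- wrap-around
        have hq0 : (p + 1) % (2 * m) = 0 := by rw [hlast, Nat.mod_self]
        have e2 : ∀ h : (p + 1) % (2 * m) < 2 * m,
            s ⟨(p + 1) % (2 * m), h⟩ = 1 := by
          intro h
          show (if (p + 1) % (2 * m) % 2 = 0 then α ^ (12 * ((p + 1) % (2 * m) / 2))
            else α ^ (12 * ((p + 1) % (2 * m) / 2) + 3)) = _
          rw [hq0]
          norm_num
        have hpd : p / 2 = m - 1 := by omega
        have hkey : α ^ (12 * (m - 1)) * α ^ 12 = 1 := by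
          rw [← pow_add, show 12 * (m - 1) + 12 = 12 * m by omega, hα1]
        rw [e1, e2, hpar, hpd]
        rcases ha with rfl | rfl <;> rcases hb with rfl | rfl | rfl <;>
          norm_num [idx, v2, v3, v8, v9, v10, v11, zsmul_eq_mul] <;>
            (first | ring1 | linear_combination hkey | linear_combination -hkey)
      · -- no wrap
        have hq1 : (p + 1) % (2 * m) = p + 1 := Nat.mod_eq_of_lt (by omega)
        have e2 : ∀ h : (p + 1) % (2 * m) < 2 * m,
            s ⟨(p + 1) % (2 * m), h⟩ = α ^ (12 * (p / 2) + 12) := by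
          intro h
          show (if (p + 1) % (2 * m) % 2 = 0 then α ^ (12 * ((p + 1) % (2 * m) / 2))
            else α ^ (12 * ((p + 1) % (2 * m) / 2) + 3)) = _
          rw [hq1, if_pos (by omega), show (p + 1) / 2 = p / 2 + 1 by omega,
            show 12 * (p / 2 + 1) = 12 * (p / 2) + 12 by ring]
        rw [e1, e2, hpar]
        rcases ha with rfl | rfl <;> rcases hb with rfl | rfl | rfl <;>
          norm_num [idx, v2, v3, v8, v9, v10, v11, zsmul_eq_mul] <;> ring
  -- classification
  have hClass : ∀ e ∈ cyclicBall (2 * m) 2 1 1, e = 0 ∨ ∃ p : ℕ, ∃ hp : p < 2 * m, ∃ a b : ℤ,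
      (a = 1 ∨ a = -1) ∧ (b = 1 ∨ b = 0 ∨ b = -1) ∧ e = V (2 * m) p a b := by
    intro e he
    obtain ⟨hbd, w, hw⟩ := he
    haveI : NeZero (2 * m) := ⟨by omega⟩
    haveI : Fact (1 < 2 * m) := ⟨by omega⟩
    have hbd' : ∀ ℓ, -1 ≤ e ℓ ∧ e ℓ ≤ 1 := by
      intro ℓ; have := hbd ℓ; simpa using this
    have hp0lt : w.val < 2 * m := w.val_lt
    have hzero : ∀ ℓ : Fin (2 * m), ℓ.val ≠ w.val → ℓ.val ≠ (w.val + 1) % (2 * m) → e ℓ = 0 := by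
      intro ℓ h1 h2
      apply hw
      intro j hj
      interval_cases j
      · simp only [Nat.cast_zero, add_zero]
        intro hc
        apply h1
        have := congrArg ZMod.val hc
        rwa [ZMod.val_cast_of_lt ℓ.isLt] at this
      · simp only [Nat.cast_one]
        intro hc
        apply h2
        have := congrArg ZMod.val hc
        rwa [ZMod.val_cast_of_lt ℓ.isLt, ZMod.val_add, ZMod.val_one] at this
    set P : Fin (2 * m) := ⟨w.val, hp0lt⟩ with hP
    set Q : Fin (2 * m) := ⟨(w.val + 1) % (2 * m), Nat.mod_lt _ (by omega)⟩ with hQ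
    by_cases ha0 : e P = 0
    · by_cases hb0 : e Q = 0
      · left
        funext ℓ
        show e ℓ = 0
        by_cases h1 : ℓ.val = w.val
        · rwa [show ℓ = P from Fin.ext h1]
        · by_cases h2 : ℓ.val = (w.val + 1) % (2 * m)
          · rwa [show ℓ = Q from Fin.ext h2]
          · exact hzero ℓ h1 h2
      · right
        refine ⟨(w.val + 1) % (2 * m), Nat.mod_lt _ (by omega), e Q, 0, ?_,
          Or.inr (Or.inl rfl), ?_⟩
        · have := hbd' Q; omega
        · funext ℓ
          show e ℓ = V (2 * m) ((w.val + 1) % (2 * m)) (e Q) 0 ℓ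
          simp only [V]
          by_cases h1 : ℓ.val = (w.val + 1) % (2 * m)
          · rw [if_pos h1, show ℓ = Q from Fin.ext h1]
          · rw [if_neg h1, ite_self]
            by_cases h2 : ℓ.val = w.val
            · rw [show ℓ = P from Fin.ext h2]; exact ha0
            · exact hzero ℓ h2 h1
    · right
      refine ⟨w.val, hp0lt, e P, e Q, ?_, ?_, ?_⟩
      · have := hbd' P; omega
      · have := hbd' Q; omega
      · funext ℓ
        show e ℓ = V (2 * m) w.val (e P) (e Q) ℓ
        simp only [V]
        by_cases h1 : ℓ.val = w.val
        · rw [if_pos h1, show ℓ = P from Fin.ext h1]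
        · rw [if_neg h1]
          by_cases h2 : ℓ.val = (w.val + 1) % (2 * m)
          · rw [if_pos h2, show ℓ = Q from Fin.ext h2]
          · rw [if_neg h2]; exact hzero ℓ h1 h2
  -- main argument
  intro e he e' he' hsum
  simp only [hs] at hsum
  have hne' : ∀ p : ℕ, ∀ hp : p < 2 * m, ∀ a b : ℤ, (a = 1 ∨ a = -1) → (b = 1 ∨ b = 0 ∨ b = -1) →
      ∑ t, V (2 * m) p a b t • s t ≠ 0 := by
    intro p hp a b ha hb
    rw [hS p hp a b ha hb]
    exact mul_ne_zero (pow_ne_zero _ hα0) (hne _)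
  rcases hClass e he with rfl | ⟨p, hp, a, b, ha, hb, rfl⟩ <;>
    rcases hClass e' he' with rfl | ⟨p', hp', a', b', ha', hb', rfl⟩
  · rfl
  · exfalso
    apply hne' p' hp' a' b' ha' hb'
    rw [← hsum]
    simp
  · exfalso
    apply hne' p hp a b ha hb
    rw [hsum]
    simp
  · have heq : α ^ (12 * (p / 2)) * vals (idx (p % 2) a b)
        = α ^ (12 * (p' / 2)) * vals (idx (p' % 2) a' b') := by
      rw [← hS p hp a b ha hb, ← hS p' hp' a' b' ha' hb']
      exact hsum
    obtain ⟨hj, hi⟩ := hB (p / 2) (p' / 2) _ _ (by omega) (by omega) heq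
    obtain ⟨hpar, haa, hbb⟩ := idx_inj (by omega) (by omega) ha ha' hb hb' hi
    have hpp : p = p' := by omega
    rw [hpp, haa, hbb]
end
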